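/- arXiv:2111.04809 — 3 statements merged into one kernel-verified Lean document; each statement's English description precedes it below -/
import Mathlib

section
/- Let Δ ≥ 3 and q ≥ 2 be integers, let α be a real number with 0 < α < 2π/(3Δ), and set δ_Δ = sin(α/2)·cos(αΔ/2). Fix η ∈ (0,1). Then for any real symmetric q×q matrix A satisfying |A_{i,j} − 1| < (1−η)·δ_Δ for all i, j ∈ {1,…,q}, the graph homomorphism measure μ_{G,A} satisfies strong spatial mixing on the family 𝒢_Δ of all graphs of maximum degree at most Δ with exponential rate r = 1/(1−η), i.e. there exists C > 0 such that for every G ∈ 𝒢_Δ, every vertex v, every color i ∈ [q], every Λ ⊆ V(G)∖{v} and all boundary conditions σ, τ : Λ → [q]: |Pr_μ[Ψ(v)=i | σ] − Pr_μ[Ψ(v)=i | τ]| ≤ C·(1−η)^{d_G(v,σ≠τ)}. -/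
set_option linter.unusedSectionVars false
set_option linter.deprecated false
set_option linter.unusedVariables false
set_option maxHeartbeats 1000000


open Finset

noncomputable section

namespace GraphHom

open scoped Classical

variable {V : Type*} {q : ℕ}

/-- The weight of an (unordered) edge `e` under the coloring `ψ` and the matrix `B`.
For a symmetric matrix `B` and `e = {u,w}` this is exactly `B (ψ u) (ψ w)`. -/
def edgeWeight {R : Type*} [Field R] (B : Matrix (Fin q) (Fin q) R) (ψ : V → Fin q)
    (e : Sym2 V) : R :=
  Sym2.lift ⟨fun u w => (B (ψ u) (ψ w) + B (ψ w) (ψ u)) / 2, fun u w => by ring⟩ e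

/-- The edges of `G` as a `Finset`. -/
def edges [Fintype V] (G : SimpleGraph V) : Finset (Sym2 V) :=
  G.edgeSet.toFinite.toFinset

/-- The graph homomorphism partition function with boundary condition `σ` on `Λ`:
`Z^σ_G(B) = ∑_{ψ : V → [q], ψ|_Λ = σ|_Λ} ∏_{uv ∈ E} B_{ψ(u),ψ(v)}`. -/
def Zcond {R : Type*} [Field R] [Fintype V] (G : SimpleGraph V)
    (B : Matrix (Fin q) (Fin q) R) (Λ : Finset V) (σ : V → Fin q) : R :=
  ∑ ψ : V → Fin q, if ∀ u ∈ Λ, ψ u = σ u then ∏ e ∈ edges G, edgeWeight B ψ e else 0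

/-- The interpolation matrix `J + z(A − J)`, i.e. the matrix with entries
`1 + z(A_{ij} − 1)`, for a real matrix `A`. -/
def intMat (A : Matrix (Fin q) (Fin q) ℝ) (z : ℂ) : Matrix (Fin q) (Fin q) ℂ :=
  fun i j => 1 + z * ((A i j : ℂ) - 1)

/-- The ratio `P^σ_{G,v,i;A}(z) = Z^{σ_{v,i}}_G(J + z(A−J)) / Z^σ_G(J + z(A−J))`. -/
def ratio [Fintype V] (G : SimpleGraph V) (A : Matrix (Fin q) (Fin q) ℝ)
    (Λ : Finset V) (σ : V → Fin q) (v : V) (i : Fin q) (z : ℂ) : ℂ :=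
  Zcond G (intMat A z) (insert v Λ) (Function.update σ v i) / Zcond G (intMat A z) Λ σ

/-- The conditional probability `Pr_μ[Ψ(v) = i ∣ σ]` in the graph homomorphism measure
`μ_{G,A}`:  `Z^{σ_{v,i}}_G(A) / Z^σ_G(A)`. -/
def condProb [Fintype V] (G : SimpleGraph V) (A : Matrix (Fin q) (Fin q) ℝ)
    (Λ : Finset V) (σ : V → Fin q) (v : V) (i : Fin q) : ℝ :=
  Zcond G A (insert v Λ) (Function.update σ v i) / Zcond G A Λ σ

/-- `G` has maximum degree at most `Δ`. -/
def MaxDegLE [Fintype V] (G : SimpleGraph V) (Δ : ℕ) : Prop :=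
  ∀ v : V, (univ.filter fun u => G.Adj v u).card ≤ Δ

end GraphHom

namespace GraphHomAux


lemma frac_mono_num {a a' b : ℝ} (h : a ≤ a') (hb : 0 ≤ b) (h1 : 0 < a + b) :
    a / (a + b) ≤ a' / (a' + b) := by
  have h2 : 0 < a' + b := by linarith
  rw [div_le_div_iff₀ h1 h2]; nlinarith

lemma frac_anti_den {a b b' : ℝ} (h : b' ≤ b) (ha : 0 ≤ a) (h1 : 0 < a + b') :
    a / (a + b) ≤ a / (a + b') := by
  exact div_le_div_of_nonneg_left ha h1 (by linarith)

lemma div_sub_div_le_eps {ε s t u u' w w' : ℝ} (hε0 : 0 ≤ ε) (hε1 : ε < 1)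
    (hs : 0 ≤ s) (ht : 0 ≤ t) (hst : 0 < s + t)
    (hu1 : (1-ε)*s ≤ u) (hu2 : u ≤ (1+ε)*s)
    (hu'1 : (1-ε)*t ≤ u') (hu'2 : u' ≤ (1+ε)*t)
    (hw1 : (1-ε)*s ≤ w) (hw2 : w ≤ (1+ε)*s)
    (hw'1 : (1-ε)*t ≤ w') (hw'2 : w' ≤ (1+ε)*t) :
    u / (u + u') - w / (w + w') ≤ ε := by
  have hd1 : (0:ℝ) < (1+ε)*s + (1-ε)*t := by nlinarith
  have hd2 : (0:ℝ) < (1-ε)*s + (1+ε)*t := by nlinarith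
  have huu : 0 < u + u' := by nlinarith
  have hww : 0 < w + w' := by nlinarith
  have h1 : u / (u + u') ≤ ((1+ε)*s) / ((1+ε)*s + u') :=
    frac_mono_num hu2 (by nlinarith) huu
  have h2 : ((1+ε)*s) / ((1+ε)*s + u') ≤ ((1+ε)*s) / ((1+ε)*s + (1-ε)*t) :=
    frac_anti_den hu'1 (by nlinarith) hd1
  have h3 : ((1-ε)*s) / ((1-ε)*s + (1+ε)*t) ≤ ((1-ε)*s) / ((1-ε)*s + w') :=
    frac_anti_den hw'2 (by nlinarith) (by nlinarith)
  have h4 : ((1-ε)*s) / ((1-ε)*s + w') ≤ w / (w + w') :=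
    frac_mono_num hw1 (by nlinarith) (by nlinarith)
  have key : ((1+ε)*s) / ((1+ε)*s + (1-ε)*t) - ((1-ε)*s) / ((1-ε)*s + (1+ε)*t) ≤ ε := by
    rw [div_sub_div _ _ hd1.ne' hd2.ne', div_le_iff₀ (mul_pos hd1 hd2)]
    nlinarith [mul_nonneg (mul_nonneg hε0 (show (0:ℝ) ≤ 1 - ε^2 by nlinarith)) (sq_nonneg (s-t))]
  linarith

lemma deg_sin_cos_le {Δ : ℕ} (hΔ : 3 ≤ Δ) {α : ℝ} (hα0 : 0 < α)
    (hα1 : α < 2*Real.pi/(3*Δ)) :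
    (Δ:ℝ) * (Real.sin (α/2) * Real.cos (α*Δ/2)) ≤ 3/4 := by
  have hΔ' : (3:ℝ) ≤ (Δ:ℝ) := by exact_mod_cast hΔ
  have hΔ0 : (0:ℝ) < Δ := by linarith
  set x : ℝ := α * Δ / 2 with hx
  have hx0 : 0 < x := by positivity
  have hxlt : x < Real.pi / 3 := by
    have h3Δ : (0:ℝ) < 3 * Δ := by positivity
    have := (lt_div_iff₀ h3Δ).1 hα1
    rw [hx]; nlinarith
  have hpi : Real.pi < 3.15 := Real.pi_lt_d2
  have hx105 : x < 1.05 := by nlinarith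
  have hcosnn : 0 ≤ Real.cos x :=
    Real.cos_nonneg_of_mem_Icc ⟨by linarith, by linarith [Real.pi_gt_three]⟩
  have hsin : (Δ:ℝ) * Real.sin (α/2) ≤ x := by
    have := Real.sin_le (le_of_lt (show (0:ℝ) < α/2 by linarith))
    rw [hx]; nlinarith
  have hsin0 : 0 ≤ Real.sin (α/2) := by
    apply Real.sin_nonneg_of_nonneg_of_le_pi <;> nlinarith [Real.pi_gt_three]
  have step1 : (Δ:ℝ) * (Real.sin (α/2) * Real.cos (α*Δ/2)) ≤ x * Real.cos x := by
    rw [hx]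
    calc (Δ:ℝ) * (Real.sin (α/2) * Real.cos (α*Δ/2))
        = ((Δ:ℝ) * Real.sin (α/2)) * Real.cos (α*Δ/2) := by ring
      _ ≤ (α * Δ / 2) * Real.cos (α*Δ/2) := by
          apply mul_le_mul_of_nonneg_right _ hcosnn
          exact hsin
  refine step1.trans ?_
  rcases le_or_gt x 1 with hle | hgt
  · have hb := Real.cos_bound (show |x| ≤ 1 by rw [abs_of_nonneg hx0.le]; exact hle)
    rw [abs_le, abs_of_nonneg hx0.le] at hb
    have hcos : Real.cos x ≤ 1 - x^2/2 + x^4 * (5/96) := by linarith [hb.2]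
    have : x * Real.cos x ≤ x * (1 - x^2/2 + x^4 * (5/96)) :=
      mul_le_mul_of_nonneg_left hcos hx0.le
    refine this.trans ?_
    nlinarith [sq_nonneg (x - 0.86), sq_nonneg x, sq_nonneg (x^2 - 0.74), mul_nonneg hx0.le (sq_nonneg (x-0.86)), mul_nonneg (mul_nonneg hx0.le hx0.le) (sq_nonneg (x-0.86)), mul_nonneg (mul_nonneg (mul_nonneg hx0.le hx0.le) hx0.le) (sq_nonneg (x-0.86))]
  · have hcos1 : Real.cos x ≤ Real.cos 1 := by
      apply Real.cos_le_cos_of_nonneg_of_le_pi (by norm_num) (by nlinarith [Real.pi_gt_three]) hgt.le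
    have := Real.cos_one_le
    nlinarith [Real.cos_nonneg_of_mem_Icc (show x ∈ Set.Icc (-(Real.pi/2)) (Real.pi/2) from ⟨by linarith, by linarith [Real.pi_gt_three]⟩)]


-- one-sided bound: for f with values in [0,1],
-- sum f*(p - p') <= eps where p,p' are the normalized measures.
lemma oneSidedF {q : ℕ} (hq : 0 < q) {ε : ℝ} (hε0 : 0 ≤ ε) (hε1 : ε < 1)
    (x c b : Fin q → ℝ) (hx : ∀ i, 0 < x i)
    (hc : ∀ i, |c i - 1| ≤ ε) (hb : ∀ i, |b i - 1| ≤ ε)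
    (f : Fin q → ℝ) (hf0 : ∀ i, 0 ≤ f i) (hf1 : ∀ i, f i ≤ 1) :
    ∑ i, f i * (x i * c i / ∑ j, x j * c j) - ∑ i, f i * (x i * b i / ∑ j, x j * b j) ≤ ε := by
  classical
  have hne : (univ : Finset (Fin q)).Nonempty := by
    have : Nonempty (Fin q) := ⟨⟨0, hq⟩⟩
    exact univ_nonempty
  set C := ∑ j, x j * c j with hC
  set B := ∑ j, x j * b j with hB
  have hcpos : ∀ i, 0 < c i := fun i => by have := (abs_le.1 (hc i)).1; linarith
  have hbpos : ∀ i, 0 < b i := fun i => by have := (abs_le.1 (hb i)).1; linarith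
  have hCpos : 0 < C := Finset.sum_pos (fun i _ => mul_pos (hx i) (hcpos i)) hne
  have hBpos : 0 < B := Finset.sum_pos (fun i _ => mul_pos (hx i) (hbpos i)) hne
  set p : Fin q → ℝ := fun i => x i * c i / C with hp
  set p' : Fin q → ℝ := fun i => x i * b i / B with hp'
  -- key: for the set S of indices where p' ≤ p
  set S : Finset (Fin q) := univ.filter (fun i => p' i ≤ p i) with hS
  have key : ∑ i ∈ S, p i - ∑ i ∈ S, p' i ≤ ε := by
    set s := ∑ i ∈ S, x i with hs
    set t := ∑ i ∈ Sᶜ, x i with ht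
    have hsum : ∀ y : Fin q → ℝ, ∑ i ∈ S, y i + ∑ i ∈ Sᶜ, y i = ∑ i, y i := by
      intro y; exact Finset.sum_add_sum_compl S y
    have hCsplit : C = (∑ i ∈ S, x i * c i) + ∑ i ∈ Sᶜ, x i * c i := (hsum _).symm
    have hBsplit : B = (∑ i ∈ S, x i * b i) + ∑ i ∈ Sᶜ, x i * b i := (hsum _).symm
    have hps : ∑ i ∈ S, p i = (∑ i ∈ S, x i * c i) / C := by
      rw [hp]; rw [← Finset.sum_div]
    have hps' : ∑ i ∈ S, p' i = (∑ i ∈ S, x i * b i) / B := by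
      rw [hp']; rw [← Finset.sum_div]
    have bnd : ∀ (T : Finset (Fin q)) (y : Fin q → ℝ), (∀ i, |y i - 1| ≤ ε) →
        (1-ε) * (∑ i ∈ T, x i) ≤ ∑ i ∈ T, x i * y i ∧
        (∑ i ∈ T, x i * y i) ≤ (1+ε) * (∑ i ∈ T, x i) := by
      intro T y hy
      constructor
      · rw [Finset.mul_sum]
        apply Finset.sum_le_sum
        intro i _
        have := (abs_le.1 (hy i)).1
        nlinarith [(hx i).le]
      · rw [Finset.mul_sum]
        apply Finset.sum_le_sum
        intro i _
        have := (abs_le.1 (hy i)).2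
        nlinarith [(hx i).le]
    have hsnn : 0 ≤ s := Finset.sum_nonneg fun i _ => (hx i).le
    have htnn : 0 ≤ t := Finset.sum_nonneg fun i _ => (hx i).le
    have hstpos : 0 < s + t := by
      have : s + t = ∑ i, x i := hsum x
      rw [this]
      exact Finset.sum_pos (fun i _ => hx i) hne
    rw [hps, hps', hCsplit, hBsplit]
    exact div_sub_div_le_eps hε0 hε1 hsnn htnn hstpos
      (bnd S c hc).1 (bnd S c hc).2 (bnd Sᶜ c hc).1 (bnd Sᶜ c hc).2
      (bnd S b hb).1 (bnd S b hb).2 (bnd Sᶜ b hb).1 (bnd Sᶜ b hb).2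
  -- compare f-average with S-sum
  have comp : ∑ i, f i * p i - ∑ i, f i * p' i ≤ ∑ i ∈ S, p i - ∑ i ∈ S, p' i := by
    rw [← Finset.sum_sub_distrib, ← Finset.sum_sub_distrib]
    have : ∑ i ∈ S, (p i - p' i) = ∑ i, (if i ∈ S then p i - p' i else 0) := by
      rw [Finset.sum_ite_mem, Finset.univ_inter]
    rw [this]
    apply Finset.sum_le_sum
    intro i _
    by_cases hi : i ∈ S
    · simp only [hi, if_true]
      have hd : 0 ≤ p i - p' i := by
        have := (Finset.mem_filter.1 hi).2; linarith
      calc f i * p i - f i * p' i = f i * (p i - p' i) := by ring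
        _ ≤ 1 * (p i - p' i) := mul_le_mul_of_nonneg_right (hf1 i) hd
        _ = p i - p' i := one_mul _
    · simp only [hi, if_false]
      have hd : p i - p' i < 0 := by
        have : ¬ (p' i ≤ p i) := by
          intro h; exact hi (Finset.mem_filter.2 ⟨Finset.mem_univ i, h⟩)
        linarith [lt_of_not_ge this]
      calc f i * p i - f i * p' i = f i * (p i - p' i) := by ring
        _ ≤ 0 := mul_nonpos_of_nonneg_of_nonpos (hf0 i) hd.le
  linarith

lemma exp_diff_le {q : ℕ} (hq : 0 < q) {ε : ℝ} (hε0 : 0 ≤ ε) (hε1 : ε < 1)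
    (x c b : Fin q → ℝ) (hx : ∀ i, 0 < x i)
    (hc : ∀ i, |c i - 1| ≤ ε) (hb : ∀ i, |b i - 1| ≤ ε)
    (f : Fin q → ℝ) (hf0 : ∀ i, 0 ≤ f i) (hf1 : ∀ i, f i ≤ 1) :
    |∑ i, f i * (x i * c i / ∑ j, x j * c j) - ∑ i, f i * (x i * b i / ∑ j, x j * b j)| ≤ ε := by
  classical
  have hne : (univ : Finset (Fin q)).Nonempty := by
    have : Nonempty (Fin q) := ⟨⟨0, hq⟩⟩
    exact univ_nonempty
  have hcpos : ∀ i, 0 < c i := fun i => by have := (abs_le.1 (hc i)).1; linarith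
  have hbpos : ∀ i, 0 < b i := fun i => by have := (abs_le.1 (hb i)).1; linarith
  have hCpos : 0 < ∑ j, x j * c j := Finset.sum_pos (fun i _ => mul_pos (hx i) (hcpos i)) hne
  have hBpos : 0 < ∑ j, x j * b j := Finset.sum_pos (fun i _ => mul_pos (hx i) (hbpos i)) hne
  rw [abs_le]
  constructor
  · -- lower: use 1 - f
    have h1 := oneSidedF hq hε0 hε1 x c b hx hc hb (fun i => 1 - f i)
      (fun i => by linarith [hf1 i]) (fun i => by linarith [hf0 i])
    have e1 : ∑ i, (1 - f i) * (x i * c i / ∑ j, x j * c j)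
        = 1 - ∑ i, f i * (x i * c i / ∑ j, x j * c j) := by
      have h01 : ∑ i, (x i * c i / ∑ j, x j * c j) = 1 := by
        rw [← Finset.sum_div, div_self hCpos.ne']
      have hs : ∑ i, (1 - f i) * (x i * c i / ∑ j, x j * c j)
          = (∑ i, (x i * c i / ∑ j, x j * c j)) - ∑ i, f i * (x i * c i / ∑ j, x j * c j) := by
        rw [← Finset.sum_sub_distrib]
        apply Finset.sum_congr rfl
        intro i _; ring
      rw [hs, h01]
    have e2 : ∑ i, (1 - f i) * (x i * b i / ∑ j, x j * b j)
        = 1 - ∑ i, f i * (x i * b i / ∑ j, x j * b j) := by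
      have h01 : ∑ i, (x i * b i / ∑ j, x j * b j) = 1 := by
        rw [← Finset.sum_div, div_self hBpos.ne']
      have hs : ∑ i, (1 - f i) * (x i * b i / ∑ j, x j * b j)
          = (∑ i, (x i * b i / ∑ j, x j * b j)) - ∑ i, f i * (x i * b i / ∑ j, x j * b j) := by
        rw [← Finset.sum_sub_distrib]
        apply Finset.sum_congr rfl
        intro i _; ring
      rw [hs, h01]
    rw [e1, e2] at h1
    linarith
  · exact oneSidedF hq hε0 hε1 x c b hx hc hb f hf0 hf1


end GraphHomAux

namespace GraphHom
open scoped Classical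

variable {V : Type*} [Fintype V] {q : ℕ} (G : SimpleGraph V) (A : Matrix (Fin q) (Fin q) ℝ)

/-- symmetrized matrix entry -/

def w2 (A : Matrix (Fin q) (Fin q) ℝ) (i j : Fin q) : ℝ := (A i j + A j i) / 2

lemma edgeWeight_mk (ψ : V → Fin q) (u w : V) :
    edgeWeight A ψ s(u, w) = w2 A (ψ u) (ψ w) := rfl

lemma mem_edges {e : Sym2 V} : e ∈ edges G ↔ e ∈ G.edgeSet := Set.Finite.mem_toFinset _

lemma w2_pos {ε : ℝ} (hε1 : ε < 1) (hA : ∀ i j, |A i j - 1| ≤ ε) (i j : Fin q) :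
    0 < w2 A i j := by
  have h1 := (abs_le.1 (hA i j)).1
  have h2 := (abs_le.1 (hA j i)).1
  unfold w2; linarith

lemma w2_bound {ε : ℝ} (hA : ∀ i j, |A i j - 1| ≤ ε) (i j : Fin q) :
    |w2 A i j - 1| ≤ ε := by
  have h1 := abs_le.1 (hA i j)
  have h2 := abs_le.1 (hA j i)
  rw [abs_le]; unfold w2; constructor <;> [linarith [h1.1, h2.1]; linarith [h1.2, h2.2]]

lemma edgeWeight_pos {ε : ℝ} (hε1 : ε < 1) (hA : ∀ i j, |A i j - 1| ≤ ε)
    (ψ : V → Fin q) (e : Sym2 V) : 0 < edgeWeight A ψ e := by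
  induction e using Sym2.ind with
  | _ u w => rw [edgeWeight_mk]; exact w2_pos A hε1 hA _ _

lemma edgeWeight_congr {ψ ψ' : V → Fin q} {e : Sym2 V} (h : ∀ x ∈ e, ψ x = ψ' x) :
    edgeWeight A ψ e = edgeWeight A ψ' e := by
  induction e using Sym2.ind with
  | _ u w =>
    rw [edgeWeight_mk, edgeWeight_mk, h u (Sym2.mem_mk_left u w), h w (Sym2.mem_mk_right u w)]

lemma prod_edgeWeight_pos {ε : ℝ} (hε1 : ε < 1) (hA : ∀ i j, |A i j - 1| ≤ ε)
    (ψ : V → Fin q) : 0 < ∏ e ∈ edges G, edgeWeight A ψ e :=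
  Finset.prod_pos fun e _ => edgeWeight_pos A hε1 hA ψ e

lemma Zcond_pos {ε : ℝ} (hε1 : ε < 1) (hA : ∀ i j, |A i j - 1| ≤ ε)
    (Λ : Finset V) (σ : V → Fin q) : 0 < Zcond G A Λ σ := by
  unfold Zcond
  apply Finset.sum_pos'
  · intro ψ _
    split
    · exact (prod_edgeWeight_pos G A hε1 hA ψ).le
    · exact le_rfl
  · refine ⟨σ, Finset.mem_univ σ, ?_⟩
    rw [if_pos (fun u _ => rfl)]
    exact prod_edgeWeight_pos G A hε1 hA σ

lemma Zcond_decompose {Λ : Finset V} {w : V} (hw : w ∉ Λ) (σ : V → Fin q) :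
    Zcond G A Λ σ = ∑ j : Fin q, Zcond G A (insert w Λ) (Function.update σ w j) := by
  symm
  unfold Zcond
  rw [Finset.sum_comm]
  apply Finset.sum_congr rfl
  intro ψ _
  have hiff : ∀ j : Fin q, (∀ u ∈ insert w Λ, ψ u = Function.update σ w j u)
      ↔ (ψ w = j ∧ ∀ u ∈ Λ, ψ u = σ u) := by
    intro j
    constructor
    · intro h
      refine ⟨by simpa using h w (Finset.mem_insert_self w Λ), ?_⟩
      intro u hu
      have hne : u ≠ w := fun e => hw (by rwa [e] at hu)
      have := h u (Finset.mem_insert_of_mem hu)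
      rwa [Function.update_of_ne hne] at this
    · rintro ⟨h1, h2⟩ u hu
      rcases Finset.mem_insert.1 hu with h | hu'
      · subst h; rw [Function.update_self]; exact h1
      · rw [Function.update_of_ne (fun e => hw (by rwa [e] at hu'))]; exact h2 u hu'
  calc ∑ j : Fin q, (if ∀ u ∈ insert w Λ, ψ u = Function.update σ w j u
          then ∏ e ∈ edges G, edgeWeight A ψ e else 0)
      = ∑ j : Fin q, (if (ψ w = j ∧ ∀ u ∈ Λ, ψ u = σ u)
          then ∏ e ∈ edges G, edgeWeight A ψ e else 0) := by
        apply Finset.sum_congr rfl; intro j _; exact if_congr (hiff j) rfl rfl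
    _ = if ∀ u ∈ Λ, ψ u = σ u then ∏ e ∈ edges G, edgeWeight A ψ e else 0 := by
        by_cases hC : ∀ u ∈ Λ, ψ u = σ u
        · rw [if_pos hC,
            Finset.sum_congr rfl (fun j _ => if_congr (and_iff_left hC) rfl rfl),
            Finset.sum_ite_eq univ (ψ w) (fun _ => ∏ e ∈ edges G, edgeWeight A ψ e),
            if_pos (Finset.mem_univ _)]
        · rw [if_neg hC,
            Finset.sum_congr rfl (fun j _ => if_neg (fun h => hC h.2)),
            Finset.sum_const_zero]

lemma condProb_nonneg {ε : ℝ} (hε1 : ε < 1) (hA : ∀ i j, |A i j - 1| ≤ ε)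
    (Λ : Finset V) (σ : V → Fin q) (v : V) (i : Fin q) :
    0 ≤ condProb G A Λ σ v i :=
  div_nonneg (Zcond_pos G A hε1 hA _ _).le (Zcond_pos G A hε1 hA _ _).le

lemma sum_condProb {ε : ℝ} (hε1 : ε < 1) (hA : ∀ i j, |A i j - 1| ≤ ε)
    {Λ : Finset V} {v : V} (hv : v ∉ Λ) (σ : V → Fin q) :
    ∑ j : Fin q, condProb G A Λ σ v j = 1 := by
  unfold condProb
  rw [← Finset.sum_div, ← Zcond_decompose G A hv σ, div_self (Zcond_pos G A hε1 hA Λ σ).ne']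

lemma condProb_tower {ε : ℝ} (hε1 : ε < 1) (hA : ∀ i j, |A i j - 1| ≤ ε)
    {Λ : Finset V} {v w : V} (hv : v ∉ Λ) (hw : w ∉ Λ) (hvw : v ≠ w)
    (σ : V → Fin q) (i : Fin q) :
    condProb G A Λ σ v i = ∑ j : Fin q, condProb G A Λ σ w j *
      condProb G A (insert w Λ) (Function.update σ w j) v i := by
  have hZ : Zcond G A Λ σ ≠ 0 := (Zcond_pos G A hε1 hA Λ σ).ne'
  have hterm : ∀ j : Fin q, condProb G A Λ σ w j *
      condProb G A (insert w Λ) (Function.update σ w j) v i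
      = Zcond G A (insert v (insert w Λ))
          (Function.update (Function.update σ w j) v i) / Zcond G A Λ σ := by
    intro j
    have hZj : Zcond G A (insert w Λ) (Function.update σ w j) ≠ 0 :=
      (Zcond_pos G A hε1 hA _ _).ne'
    unfold condProb
    field_simp
  rw [Finset.sum_congr rfl (fun j _ => hterm j), ← Finset.sum_div]
  unfold condProb
  congr 1
  have hwv : w ∉ insert v Λ := by
    simp only [Finset.mem_insert]
    rintro (rfl | h)
    exacts [hvw rfl, hw h]
  rw [Zcond_decompose G A hwv (Function.update σ v i)]
  apply Finset.sum_congr rfl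
  intro j _
  rw [Finset.insert_comm, Function.update_comm hvw]

/-- expectation of f(Ψ v) conditioned on σ on Λ -/
def Ef (G : SimpleGraph V) (A : Matrix (Fin q) (Fin q) ℝ) (Λ : Finset V) (σ : V → Fin q)
    (v : V) (f : Fin q → ℝ) : ℝ :=
  ∑ i : Fin q, f i * condProb G A Λ σ v i

lemma Ef_tower {ε : ℝ} (hε1 : ε < 1) (hA : ∀ i j, |A i j - 1| ≤ ε)
    {Λ : Finset V} {v w : V} (hv : v ∉ Λ) (hw : w ∉ Λ) (hvw : v ≠ w)
    (σ : V → Fin q) (f : Fin q → ℝ) :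
    Ef G A Λ σ v f = ∑ j : Fin q, condProb G A Λ σ w j *
      Ef G A (insert w Λ) (Function.update σ w j) v f := by
  unfold Ef
  have h1 : ∀ i : Fin q, f i * condProb G A Λ σ v i
      = ∑ j : Fin q, condProb G A Λ σ w j *
        (f i * condProb G A (insert w Λ) (Function.update σ w j) v i) := by
    intro i
    rw [condProb_tower G A hε1 hA hv hw hvw σ i, Finset.mul_sum]
    exact Finset.sum_congr rfl fun j _ => by ring
  rw [Finset.sum_congr rfl (fun i _ => h1 i), Finset.sum_comm]
  exact Finset.sum_congr rfl fun j _ => by rw [Finset.mul_sum]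


/-- local weight of color j at v -/
def locw (A : Matrix (Fin q) (Fin q) ℝ) (G : SimpleGraph V) [Fintype V] (v : V)
    (σ : V → Fin q) (j : Fin q) : ℝ :=
  ∏ u ∈ univ.filter (G.Adj v), w2 A j (σ u)

lemma locw_pos {ε : ℝ} (hε1 : ε < 1) (hA : ∀ i j, |A i j - 1| ≤ ε)
    (v : V) (σ : V → Fin q) (j : Fin q) : 0 < locw A G v σ j :=
  Finset.prod_pos fun u _ => w2_pos A hε1 hA _ _

lemma condProb_base {ε : ℝ} (hε1 : ε < 1) (hA : ∀ i j, |A i j - 1| ≤ ε)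
    {Λ : Finset V} {v : V} (hv : v ∉ Λ) (hΛ : ∀ x : V, x ≠ v → x ∈ Λ)
    (σ : V → Fin q) (i : Fin q) :
    condProb G A Λ σ v i = locw A G v σ i / ∑ j : Fin q, locw A G v σ j := by
  have hins : ∀ x : V, x ∈ insert v Λ := by
    intro x
    by_cases h : x = v
    · subst h; exact Finset.mem_insert_self _ _
    · exact Finset.mem_insert_of_mem (hΛ x h)
  have himg : (edges G).filter (fun e => v ∈ e)
      = (univ.filter (G.Adj v)).image (fun u => s(v, u)) := by
    apply Finset.Subset.antisymm
    · intro e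
      induction e using Sym2.ind with
      | _ a b =>
        intro he
        rw [Finset.mem_filter, mem_edges, SimpleGraph.mem_edgeSet] at he
        obtain ⟨he1, he2⟩ := he
        rcases Sym2.mem_iff.1 he2 with h | h
        · subst h
          exact Finset.mem_image.2 ⟨b, Finset.mem_filter.2 ⟨Finset.mem_univ _, he1⟩, rfl⟩
        · subst h
          exact Finset.mem_image.2
            ⟨a, Finset.mem_filter.2 ⟨Finset.mem_univ _, he1.symm⟩, Sym2.eq_swap⟩
    · intro e he
      obtain ⟨u, hu, rfl⟩ := Finset.mem_image.1 he
      have hadj : G.Adj v u := (Finset.mem_filter.1 hu).2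
      exact Finset.mem_filter.2
        ⟨(mem_edges G).2 ((G.mem_edgeSet).2 hadj), Sym2.mem_mk_left v u⟩
  have hnum : ∀ j : Fin q, Zcond G A (insert v Λ) (Function.update σ v j)
      = locw A G v σ j * ∏ e ∈ (edges G).filter (fun e => ¬ v ∈ e), edgeWeight A σ e := by
    intro j
    unfold Zcond
    rw [Finset.sum_eq_single (Function.update σ v j)]
    · rw [if_pos (fun u _ => rfl),
        ← Finset.prod_filter_mul_prod_filter_not (edges G) (fun e => v ∈ e)]
      congr 1
      · rw [himg, Finset.prod_image]
        · apply Finset.prod_congr rfl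
          intro u hu
          have hadj : G.Adj v u := (Finset.mem_filter.1 hu).2
          have hne : u ≠ v := hadj.ne'
          rw [edgeWeight_mk, Function.update_self, Function.update_of_ne hne]
        · intro a _ b _ hab
          exact Sym2.congr_right.1 hab
      · apply Finset.prod_congr rfl
        intro e he
        have hve : v ∉ e := (Finset.mem_filter.1 he).2
        apply edgeWeight_congr
        intro x hx
        exact Function.update_of_ne (fun h => hve (by rwa [h] at hx)) _ _
    · intro ψ _ hne
      rw [if_neg]
      intro h
      exact hne (funext fun x => h x (hins x))
    · intro h; exact absurd (Finset.mem_univ _) h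
  have hR : 0 < ∏ e ∈ (edges G).filter (fun e => ¬ v ∈ e), edgeWeight A σ e :=
    Finset.prod_pos fun e _ => edgeWeight_pos A hε1 hA σ e
  have hden : Zcond G A Λ σ = (∑ j : Fin q, locw A G v σ j)
      * ∏ e ∈ (edges G).filter (fun e => ¬ v ∈ e), edgeWeight A σ e := by
    rw [Zcond_decompose G A hv σ, Finset.sum_congr rfl (fun j _ => hnum j),
      ← Finset.sum_mul]
  unfold condProb
  rw [hnum i, hden, mul_div_mul_right _ _ hR.ne']

lemma Ef_base_diff {ε : ℝ} (hq : 0 < q) (hε0 : 0 ≤ ε) (hε1 : ε < 1)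
    (hA : ∀ i j, |A i j - 1| ≤ ε)
    {Λ : Finset V} {v : V} (hv : v ∉ Λ) (hΛ : ∀ x : V, x ≠ v → x ∈ Λ)
    (σ τ : V → Fin q) (f : Fin q → ℝ) (hf0 : ∀ i, 0 ≤ f i) (hf1 : ∀ i, f i ≤ 1) :
    |Ef G A Λ σ v f - Ef G A Λ τ v f|
      ≤ ε * (((univ.filter (G.Adj v)).filter (fun u => σ u ≠ τ u)).card : ℝ) := by
  set nb := univ.filter (G.Adj v) with hnb
  have EfL : ∀ ρ : V → Fin q, Ef G A Λ ρ v f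
      = ∑ i : Fin q, f i * (locw A G v ρ i / ∑ j : Fin q, locw A G v ρ j) := by
    intro ρ
    unfold Ef
    exact Finset.sum_congr rfl fun i _ => by rw [condProb_base G A hε1 hA hv hΛ ρ i]
  suffices H : ∀ (n : ℕ) (σ : V → Fin q), (nb.filter (fun u => σ u ≠ τ u)).card = n →
      |Ef G A Λ σ v f - Ef G A Λ τ v f| ≤ ε * (n : ℝ) by
    exact H _ σ rfl
  intro n
  induction n with
  | zero =>
    intro σ h0
    have hag : ∀ u ∈ nb, σ u = τ u := by
      intro u hu
      by_contra hne
      have hmem : u ∈ nb.filter (fun u => σ u ≠ τ u) := Finset.mem_filter.2 ⟨hu, hne⟩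
      rw [Finset.card_eq_zero.1 h0] at hmem
      exact absurd hmem (Finset.notMem_empty u)
    have hloc : ∀ j, locw A G v σ j = locw A G v τ j := fun j =>
      Finset.prod_congr rfl (fun u hu => by rw [hag u hu])
    have heq : Ef G A Λ σ v f = Ef G A Λ τ v f := by
      rw [EfL σ, EfL τ]
      apply Finset.sum_congr rfl
      intro i _
      rw [hloc i, Finset.sum_congr rfl (fun j _ => hloc j)]
    rw [heq, sub_self, abs_zero, Nat.cast_zero, mul_zero]
  | succ n ih =>
    intro σ hcard
    have hne : (nb.filter (fun u => σ u ≠ τ u)).Nonempty := by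
      rw [← Finset.card_pos, hcard]; omega
    obtain ⟨u0, hu0⟩ := hne
    have hu0nb : u0 ∈ nb := (Finset.mem_filter.1 hu0).1
    set σ' := Function.update σ u0 (τ u0) with hσ'
    have hfilter : nb.filter (fun u => σ' u ≠ τ u)
        = (nb.filter (fun u => σ u ≠ τ u)).erase u0 := by
      ext u
      simp only [Finset.mem_filter, Finset.mem_erase]
      constructor
      · rintro ⟨h1, h2⟩
        have hneu : u ≠ u0 := by
          intro h
          subst h
          rw [hσ', Function.update_self] at h2
          exact h2 rfl
        refine ⟨hneu, h1, ?_⟩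
        rwa [hσ', Function.update_of_ne hneu] at h2
      · rintro ⟨hneu, h1, h2⟩
        refine ⟨h1, ?_⟩
        rwa [hσ', Function.update_of_ne hneu]
    have hcard' : (nb.filter (fun u => σ' u ≠ τ u)).card = n := by
      rw [hfilter, Finset.card_erase_of_mem hu0, hcard]
      omega
    have step : |Ef G A Λ σ v f - Ef G A Λ σ' v f| ≤ ε := by
      rw [EfL σ, EfL σ']
      have hx : ∀ i : Fin q, (0:ℝ) < ∏ u ∈ nb.erase u0, w2 A i (σ u) :=
        fun i => Finset.prod_pos fun u _ => w2_pos A hε1 hA _ _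
      have hlocσ : ∀ i, locw A G v σ i
          = (∏ u ∈ nb.erase u0, w2 A i (σ u)) * w2 A i (σ u0) := by
        intro i
        unfold locw
        rw [← hnb]
        exact (Finset.prod_erase_mul nb _ hu0nb).symm
      have hlocσ' : ∀ i, locw A G v σ' i
          = (∏ u ∈ nb.erase u0, w2 A i (σ u)) * w2 A i (τ u0) := by
        intro i
        unfold locw
        rw [← hnb, ← Finset.prod_erase_mul nb _ hu0nb]
        congr 1
        · apply Finset.prod_congr rfl
          intro u hu
          rw [hσ', Function.update_of_ne (Finset.ne_of_mem_erase hu)]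
        · rw [hσ', Function.update_self]
      have := GraphHomAux.exp_diff_le hq hε0 hε1
        (fun i => ∏ u ∈ nb.erase u0, w2 A i (σ u))
        (fun i => w2 A i (σ u0)) (fun i => w2 A i (τ u0)) hx
        (fun i => w2_bound A hA _ _) (fun i => w2_bound A hA _ _) f hf0 hf1
      have e1 : (∑ i : Fin q, f i * (locw A G v σ i / ∑ j : Fin q, locw A G v σ j))
          = ∑ i : Fin q, f i * ((∏ u ∈ nb.erase u0, w2 A i (σ u)) * w2 A i (σ u0)
              / ∑ j : Fin q, (∏ u ∈ nb.erase u0, w2 A j (σ u)) * w2 A j (σ u0)) :=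
        Finset.sum_congr rfl (fun i _ => by
          rw [hlocσ i, Finset.sum_congr rfl (fun j _ => hlocσ j)])
      have e2 : (∑ i : Fin q, f i * (locw A G v σ' i / ∑ j : Fin q, locw A G v σ' j))
          = ∑ i : Fin q, f i * ((∏ u ∈ nb.erase u0, w2 A i (σ u)) * w2 A i (τ u0)
              / ∑ j : Fin q, (∏ u ∈ nb.erase u0, w2 A j (σ u)) * w2 A j (τ u0)) :=
        Finset.sum_congr rfl (fun i _ => by
          rw [hlocσ' i, Finset.sum_congr rfl (fun j _ => hlocσ' j)])
      rw [e1, e2]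
      exact this
    have tail := ih σ' hcard'
    have tri : |Ef G A Λ σ v f - Ef G A Λ τ v f|
        ≤ |Ef G A Λ σ v f - Ef G A Λ σ' v f| + |Ef G A Λ σ' v f - Ef G A Λ τ v f| :=
      abs_sub_le _ _ _
    have : ε * ((n + 1 : ℕ) : ℝ) = ε + ε * (n : ℝ) := by push_cast; ring
    rw [this]
    linarith

section WalkBound

/-- walk sums: `walkS ε G U D k x` is the weighted number of walks of length `k+1`
starting at `x`, with interior vertices in `U`, ending in `D`. -/
def walkS (ε : ℝ) (G : SimpleGraph V) (U D : Finset V) : ℕ → V → ℝ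
  | 0, x => ε * ((D.filter (fun u => G.Adj x u)).card : ℝ)
  | (k+1), x => ε * ∑ y ∈ U.filter (fun y => G.Adj x y), walkS ε G U D k y

/-- total influence function -/
def Bfn (ε : ℝ) (G : SimpleGraph V) (U D : Finset V) (x : V) : ℝ :=
  ∑' k : ℕ, walkS ε G U D k x

variable {Δ : ℕ} {ε γ : ℝ}

lemma walkS_nonneg (hε0 : 0 ≤ ε) (U D : Finset V) (k : ℕ) (x : V) :
    0 ≤ walkS ε G U D k x := by
  induction k generalizing x with
  | zero =>
    simp only [walkS]
    exact mul_nonneg hε0 (Nat.cast_nonneg _)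
  | succ k ih =>
    simp only [walkS]
    exact mul_nonneg hε0 (Finset.sum_nonneg fun y _ => ih y)

lemma card_filter_adj_le (hdeg : MaxDegLE G Δ) (S : Finset V) (x : V) :
    ((S.filter (fun y => G.Adj x y)).card : ℝ) ≤ (Δ : ℝ) := by
  have h1 : (S.filter (fun y => G.Adj x y)).card ≤ (univ.filter (fun y => G.Adj x y)).card :=
    Finset.card_le_card (Finset.filter_subset_filter _ (Finset.subset_univ S))
  exact_mod_cast h1.trans (hdeg x)

lemma walkS_le_geom (hε0 : 0 ≤ ε) (hγ0 : 0 ≤ γ) (hΔε : (Δ:ℝ) * ε ≤ γ)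
    (hdeg : MaxDegLE G Δ) (U D : Finset V) (k : ℕ) (x : V) :
    walkS ε G U D k x ≤ γ ^ (k+1) := by
  induction k generalizing x with
  | zero =>
    simp only [walkS, zero_add, pow_one]
    have hc := card_filter_adj_le G hdeg D x
    nlinarith [mul_le_mul_of_nonneg_left hc hε0]
  | succ k ih =>
    simp only [walkS]
    have hsum : ∑ y ∈ U.filter (fun y => G.Adj x y), walkS ε G U D k y
        ≤ ((U.filter (fun y => G.Adj x y)).card : ℝ) * γ ^ (k+1) := by
      have := Finset.sum_le_card_nsmul (U.filter (fun y => G.Adj x y))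
        (fun y => walkS ε G U D k y) (γ ^ (k+1)) (fun y _ => ih y)
      rwa [nsmul_eq_mul] at this
    have hcard := card_filter_adj_le G hdeg U x
    have hpow : (0:ℝ) ≤ γ ^ (k+1) := pow_nonneg hγ0 _
    calc ε * ∑ y ∈ U.filter (fun y => G.Adj x y), walkS ε G U D k y
        ≤ ε * ((Δ:ℝ) * γ ^ (k+1)) := by
          apply mul_le_mul_of_nonneg_left _ hε0
          exact hsum.trans (mul_le_mul_of_nonneg_right hcard hpow)
      _ = ((Δ:ℝ) * ε) * γ ^ (k+1) := by ring
      _ ≤ γ * γ ^ (k+1) := mul_le_mul_of_nonneg_right hΔε hpow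
      _ = γ ^ (k+1+1) := by ring

lemma walkS_single_le (hε0 : 0 ≤ ε) (hγ0 : 0 ≤ γ) (hΔε : (Δ:ℝ) * ε ≤ γ)
    (hdeg : MaxDegLE G Δ) (U : Finset V) (w : V) (k : ℕ) (x : V) :
    walkS ε G U {w} k x ≤ ε * γ ^ k := by
  induction k generalizing x with
  | zero =>
    simp only [walkS, pow_zero, mul_one]
    have hle : (({w} : Finset V).filter (fun u => G.Adj x u)).card ≤ 1 := by
      calc (({w} : Finset V).filter (fun u => G.Adj x u)).card
          ≤ ({w} : Finset V).card := Finset.card_filter_le _ _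
        _ = 1 := Finset.card_singleton w
    have : ((({w} : Finset V).filter (fun u => G.Adj x u)).card : ℝ) ≤ 1 := by exact_mod_cast hle
    nlinarith
  | succ k ih =>
    simp only [walkS]
    have hsum : ∑ y ∈ U.filter (fun y => G.Adj x y), walkS ε G U {w} k y
        ≤ ((U.filter (fun y => G.Adj x y)).card : ℝ) * (ε * γ ^ k) := by
      have := Finset.sum_le_card_nsmul (U.filter (fun y => G.Adj x y))
        (fun y => walkS ε G U {w} k y) (ε * γ ^ k) (fun y _ => ih y)
      rwa [nsmul_eq_mul] at this
    have hcard := card_filter_adj_le G hdeg U x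
    have hpow : (0:ℝ) ≤ ε * γ ^ k := mul_nonneg hε0 (pow_nonneg hγ0 _)
    calc ε * ∑ y ∈ U.filter (fun y => G.Adj x y), walkS ε G U {w} k y
        ≤ ε * ((Δ:ℝ) * (ε * γ ^ k)) := by
          apply mul_le_mul_of_nonneg_left _ hε0
          exact hsum.trans (mul_le_mul_of_nonneg_right hcard hpow)
      _ = ((Δ:ℝ) * ε) * (ε * γ ^ k) := by ring
      _ ≤ γ * (ε * γ ^ k) := mul_le_mul_of_nonneg_right hΔε hpow
      _ = ε * γ ^ (k+1) := by ring

lemma summable_walkS (hε0 : 0 ≤ ε) (hγ0 : 0 ≤ γ) (hγ1 : γ < 1) (hΔε : (Δ:ℝ) * ε ≤ γ)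
    (hdeg : MaxDegLE G Δ) (U D : Finset V) (x : V) :
    Summable (fun k => walkS ε G U D k x) := by
  have hg : Summable (fun k : ℕ => γ * γ ^ k) :=
    (summable_geometric_of_lt_one hγ0 hγ1).mul_left γ
  apply Summable.of_nonneg_of_le (fun k => walkS_nonneg G hε0 U D k x) _ hg
  intro k
  have := walkS_le_geom G hε0 hγ0 hΔε hdeg U D k x
  calc walkS ε G U D k x ≤ γ ^ (k+1) := this
    _ = γ * γ ^ k := by ring

lemma Bfn_nonneg (hε0 : 0 ≤ ε) (U D : Finset V) (x : V) : 0 ≤ Bfn ε G U D x :=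
  tsum_nonneg fun k => walkS_nonneg G hε0 U D k x

lemma Bfn_fix (hε0 : 0 ≤ ε) (hγ0 : 0 ≤ γ) (hγ1 : γ < 1) (hΔε : (Δ:ℝ) * ε ≤ γ)
    (hdeg : MaxDegLE G Δ) (U D : Finset V) (x : V) :
    Bfn ε G U D x = walkS ε G U D 0 x
      + ε * ∑ y ∈ U.filter (fun y => G.Adj x y), Bfn ε G U D y := by
  rw [Bfn, Summable.tsum_eq_zero_add (summable_walkS G hε0 hγ0 hγ1 hΔε hdeg U D x)]
  congr 1
  have h1 : ∀ k : ℕ, walkS ε G U D (k+1) x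
      = ∑ y ∈ U.filter (fun y => G.Adj x y), ε * walkS ε G U D k y := by
    intro k
    simp only [walkS]
    rw [Finset.mul_sum]
  rw [tsum_congr h1, Summable.tsum_finsetSum (fun y _ =>
    ((summable_walkS G hε0 hγ0 hγ1 hΔε hdeg U D y).mul_left ε)), Finset.mul_sum]
  exact Finset.sum_congr rfl fun y _ => tsum_mul_left

lemma walkS0_le_Bfn (hε0 : 0 ≤ ε) (hγ0 : 0 ≤ γ) (hγ1 : γ < 1) (hΔε : (Δ:ℝ) * ε ≤ γ)
    (hdeg : MaxDegLE G Δ) (U D : Finset V) (x : V) :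
    walkS ε G U D 0 x ≤ Bfn ε G U D x := by
  rw [Bfn_fix G hε0 hγ0 hγ1 hΔε hdeg U D x]
  have : 0 ≤ ε * ∑ y ∈ U.filter (fun y => G.Adj x y), Bfn ε G U D y :=
    mul_nonneg hε0 (Finset.sum_nonneg fun y _ => Bfn_nonneg G hε0 U D y)
  linarith

lemma walkS_eq_zero (U D : Finset V) (k : ℕ) (x : V)
    (hfar : ∀ u ∈ D, ((k+1 : ℕ) : ℕ∞) < G.edist x u) :
    walkS ε G U D k x = 0 := by
  induction k generalizing x with
  | zero =>
    simp only [walkS]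
    have hempty : D.filter (fun u => G.Adj x u) = ∅ := by
      rw [Finset.filter_eq_empty_iff]
      intro u hu hadj
      have h1 : G.edist x u ≤ 1 := (SimpleGraph.edist_eq_one_iff_adj.2 hadj).le
      have h2 := hfar u hu
      have : ((0+1 : ℕ) : ℕ∞) = 1 := by norm_cast
      rw [this] at h2
      exact absurd h1 (not_le.2 h2)
    rw [hempty]
    simp
  | succ k ih =>
    simp only [walkS]
    have hz : ∀ y ∈ U.filter (fun y => G.Adj x y), walkS ε G U D k y = 0 := by
      intro y hy
      apply ih
      intro u hu
      have hadj : G.Adj x y := (Finset.mem_filter.1 hy).2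
      by_contra hle
      push_neg at hle
      have h1 : G.edist x y ≤ 1 := (SimpleGraph.edist_eq_one_iff_adj.2 hadj).le
      have h2 : G.edist x u ≤ G.edist x y + G.edist y u := SimpleGraph.edist_triangle
      have h3 : G.edist x u ≤ ((k+1+1 : ℕ) : ℕ∞) := by
        refine h2.trans ?_
        calc G.edist x y + G.edist y u ≤ 1 + ((k+1 : ℕ) : ℕ∞) := add_le_add h1 hle
          _ = ((k+1+1 : ℕ) : ℕ∞) := by rw [add_comm]; norm_cast
      exact absurd h3 (not_le.2 (hfar u hu))
    rw [Finset.sum_congr rfl hz]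
    simp

lemma Bfn_le_pow (hε0 : 0 ≤ ε) (hγ0 : 0 ≤ γ) (hγ1 : γ < 1) (hΔε : (Δ:ℝ) * ε ≤ γ)
    (hdeg : MaxDegLE G Δ) (U D : Finset V) (v : V) (d : ℕ)
    (hfar : ∀ u ∈ D, (d : ℕ∞) ≤ G.edist v u) :
    Bfn ε G U D v ≤ γ ^ d / (1 - γ) := by
  have hsum := summable_walkS G hε0 hγ0 hγ1 hΔε hdeg U D v
  have h1γ : 0 < 1 - γ := by linarith
  have hgeo := summable_geometric_of_lt_one hγ0 hγ1
  rcases Nat.eq_zero_or_pos d with hd | hd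
  · subst hd
    have hle : Bfn ε G U D v ≤ ∑' k : ℕ, γ ^ k := by
      apply Summable.tsum_le_tsum _ hsum hgeo
      intro k
      refine (walkS_le_geom G hε0 hγ0 hΔε hdeg U D k v).trans ?_
      exact pow_le_pow_of_le_one hγ0 hγ1.le (by omega)
    rw [tsum_geometric_of_lt_one hγ0 hγ1] at hle
    rw [pow_zero]
    rw [one_div]
    exact hle
  · obtain ⟨m, rfl⟩ : ∃ m, d = m + 1 := ⟨d-1, by omega⟩
    have hzero : ∀ i ∈ Finset.range m, walkS ε G U D i v = 0 := by
      intro i hi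
      apply walkS_eq_zero
      intro u hu
      refine lt_of_lt_of_le ?_ (hfar u hu)
      have : i + 1 < m + 1 := by have := Finset.mem_range.1 hi; omega
      exact_mod_cast this
    have hsplit := (Summable.sum_add_tsum_nat_add m hsum :
      ∑ i ∈ Finset.range m, walkS ε G U D i v + ∑' k : ℕ, walkS ε G U D (k + m) v
        = ∑' k : ℕ, walkS ε G U D k v)
    rw [Finset.sum_congr rfl hzero, Finset.sum_const_zero, zero_add] at hsplit
    rw [Bfn, ← hsplit]
    have hsum2 : Summable (fun k : ℕ => walkS ε G U D (k + m) v) :=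
      (summable_nat_add_iff m).2 hsum
    have hle : ∑' k : ℕ, walkS ε G U D (k + m) v ≤ ∑' k : ℕ, γ ^ (m+1) * γ ^ k := by
      apply Summable.tsum_le_tsum _ hsum2 (hgeo.mul_left _)
      intro k
      refine (walkS_le_geom G hε0 hγ0 hΔε hdeg U D (k+m) v).trans ?_
      rw [← pow_add]
      apply pow_le_pow_of_le_one hγ0 hγ1.le
      omega
    rw [tsum_mul_left, tsum_geometric_of_lt_one hγ0 hγ1] at hle
    rw [div_eq_mul_inv]
    exact hle

lemma Bfn_single_le (hε0 : 0 ≤ ε) (hγ0 : 0 ≤ γ) (hγ1 : γ < 1) (hΔε : (Δ:ℝ) * ε ≤ γ)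
    (hdeg : MaxDegLE G Δ) (U : Finset V) (w x : V) :
    Bfn ε G U {w} x ≤ ε / (1 - γ) := by
  have hsum := summable_walkS G hε0 hγ0 hγ1 hΔε hdeg U {w} x
  have hgeo := summable_geometric_of_lt_one hγ0 hγ1
  have hle : Bfn ε G U {w} x ≤ ∑' k : ℕ, ε * γ ^ k := by
    apply Summable.tsum_le_tsum _ hsum (hgeo.mul_left ε)
    exact fun k => walkS_single_le G hε0 hγ0 hΔε hdeg U w k x
  rw [tsum_mul_left, tsum_geometric_of_lt_one hγ0 hγ1] at hle
  rw [div_eq_mul_inv]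
  exact hle

lemma sum_filter_split {w : V} {U : Finset V} (hw : w ∈ U) (P : V → Prop)
    [DecidablePred P] (f : V → ℝ) :
    ∑ y ∈ U.filter P, f y = (∑ y ∈ (U.erase w).filter P, f y) + if P w then f w else 0 := by
  by_cases hP : P w
  · rw [if_pos hP, ← Finset.sum_erase_add (U.filter P) f (Finset.mem_filter.2 ⟨hw, hP⟩),
      ← Finset.filter_erase]
  · rw [if_neg hP, add_zero, Finset.filter_erase,
      Finset.erase_eq_of_notMem (fun hmem => hP ((Finset.mem_filter.1 hmem).2))]

lemma Bfn_elim (hε0 : 0 ≤ ε) (hγ0 : 0 ≤ γ) (hγ1 : γ < 1) (hΔε : (Δ:ℝ) * ε ≤ γ)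
    (hdeg : MaxDegLE G Δ) (U D : Finset V) {w : V} (hw : w ∈ U) (x : V) :
    Bfn ε G U D x = Bfn ε G (U.erase w) {w} x * Bfn ε G U D w + Bfn ε G (U.erase w) D x := by
  set g : V → ℝ := fun x => Bfn ε G U D x
    - (Bfn ε G (U.erase w) {w} x * Bfn ε G U D w + Bfn ε G (U.erase w) D x) with hg
  have hkey : ∀ x : V, g x = ε * ∑ y ∈ (U.erase w).filter (fun y => G.Adj x y), g y := by
    intro x
    have hβ : Bfn ε G U D x = walkS ε G U D 0 x
        + ε * ((∑ y ∈ (U.erase w).filter (fun y => G.Adj x y), Bfn ε G U D y)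
          + if G.Adj x w then Bfn ε G U D w else 0) := by
      rw [Bfn_fix G hε0 hγ0 hγ1 hΔε hdeg U D x,
        sum_filter_split hw (fun y => G.Adj x y) (fun y => Bfn ε G U D y)]
    have hA : Bfn ε G (U.erase w) {w} x = (if G.Adj x w then ε else 0)
        + ε * ∑ y ∈ (U.erase w).filter (fun y => G.Adj x y), Bfn ε G (U.erase w) {w} y := by
      rw [Bfn_fix G hε0 hγ0 hγ1 hΔε hdeg (U.erase w) {w} x]
      congr 1
      simp only [walkS]
      rw [Finset.filter_singleton]
      by_cases hadj : G.Adj x w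
      · rw [if_pos hadj, if_pos hadj]
        simp
      · rw [if_neg hadj, if_neg hadj]
        simp
    have hB : Bfn ε G (U.erase w) D x = walkS ε G U D 0 x
        + ε * ∑ y ∈ (U.erase w).filter (fun y => G.Adj x y), Bfn ε G (U.erase w) D y := by
      rw [Bfn_fix G hε0 hγ0 hγ1 hΔε hdeg (U.erase w) D x]
      simp only [walkS]
    have hgsum : ∑ y ∈ (U.erase w).filter (fun y => G.Adj x y), g y
        = (∑ y ∈ (U.erase w).filter (fun y => G.Adj x y), Bfn ε G U D y)
          - ((∑ y ∈ (U.erase w).filter (fun y => G.Adj x y), Bfn ε G (U.erase w) {w} y)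
              * Bfn ε G U D w
            + ∑ y ∈ (U.erase w).filter (fun y => G.Adj x y), Bfn ε G (U.erase w) D y) := by
      rw [Finset.sum_mul, ← Finset.sum_add_distrib, ← Finset.sum_sub_distrib]
    rw [hgsum, hg]
    simp only []
    rw [hβ, hA, hB]
    by_cases hadj : G.Adj x w
    · simp only [hadj, if_true]
      ring
    · simp only [hadj, if_false]
      ring
  have hzero : ∀ x : V, g x = 0 := by
    intro x0
    have hne : (univ : Finset V).Nonempty := ⟨x0, Finset.mem_univ _⟩
    obtain ⟨x1, _, hx1⟩ := Finset.exists_mem_eq_sup' hne (fun x => |g x|)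
    have hMle : ∀ x : V, |g x| ≤ univ.sup' hne (fun x => |g x|) :=
      fun x => Finset.le_sup' (fun x => |g x|) (Finset.mem_univ x)
    set M := univ.sup' hne (fun x => |g x|) with hM
    have hM0 : 0 ≤ M := (abs_nonneg (g x0)).trans (hMle x0)
    have hbound : |g x1| ≤ γ * M := by
      rw [hkey x1, abs_mul, abs_of_nonneg hε0]
      have habs : |∑ y ∈ (U.erase w).filter (fun y => G.Adj x1 y), g y|
          ≤ ∑ y ∈ (U.erase w).filter (fun y => G.Adj x1 y), |g y| :=
        Finset.abs_sum_le_sum_abs _ _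
      have hsum : ∑ y ∈ (U.erase w).filter (fun y => G.Adj x1 y), |g y|
          ≤ ((U.erase w).filter (fun y => G.Adj x1 y)).card • M :=
        Finset.sum_le_card_nsmul _ _ M (fun y _ => hMle y)
      rw [nsmul_eq_mul] at hsum
      have hcard := card_filter_adj_le G hdeg (U.erase w) x1
      calc ε * |∑ y ∈ (U.erase w).filter (fun y => G.Adj x1 y), g y|
          ≤ ε * (((U.erase w).filter (fun y => G.Adj x1 y)).card * M) :=
            mul_le_mul_of_nonneg_left (habs.trans hsum) hε0
        _ ≤ ε * ((Δ:ℝ) * M) := by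
            apply mul_le_mul_of_nonneg_left _ hε0
            exact mul_le_mul_of_nonneg_right hcard hM0
        _ = ((Δ:ℝ) * ε) * M := by ring
        _ ≤ γ * M := mul_le_mul_of_nonneg_right hΔε hM0
    have hMγ : M ≤ γ * M := by nth_rewrite 1 [hx1]; exact hbound
    have hM00 : M ≤ 0 := by nlinarith
    have habs0 : |g x0| ≤ 0 := (hMle x0).trans hM00
    have : |g x0| = 0 := le_antisymm habs0 (abs_nonneg _)
    exact abs_eq_zero.1 this
  have hx' := hzero x
  rw [hg] at hx'
  simp only [] at hx'
  linarith

end WalkBound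

section Main

variable {Δ : ℕ} {ε γ : ℝ}

lemma max_neg_zero (a : ℝ) : max (-a) 0 = max a 0 - a := by
  rcases le_total a 0 with h | h
  · rw [max_eq_left (by linarith : (0:ℝ) ≤ -a), max_eq_right h]
    ring
  · rw [max_eq_right (by linarith : -a ≤ (0:ℝ)), max_eq_left h]
    ring

/-- The key one-step recursion: expose the unfixed vertex `w'`. -/
lemma step_bound (hq : 0 < q) (hε0 : 0 ≤ ε) (hε1 : ε < 1) (hγ0 : 0 ≤ γ) (hγ1 : γ < 1)
    (hΔε : (Δ:ℝ) * ε ≤ γ) (hdeg : MaxDegLE G Δ) (hA : ∀ i j, |A i j - 1| ≤ ε)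
    {Λ : Finset V} {x w' : V} (hx : x ∉ Λ) (hw' : w' ∉ Λ) (hxw : x ≠ w')
    (σ τ : V → Fin q) (f : Fin q → ℝ) (hf0 : ∀ i, 0 ≤ f i) (hf1 : ∀ i, f i ≤ 1)
    (IH : ∀ σ' τ' : V → Fin q,
      |Ef G A (insert w' Λ) σ' x f - Ef G A (insert w' Λ) τ' x f|
        ≤ Bfn ε G (Λᶜ.erase w')
            ((insert w' Λ).filter (fun u => σ' u ≠ τ' u)) x) :
    |Ef G A Λ σ x f - Ef G A Λ τ x f|
      ≤ (∑ j : Fin q, max (condProb G A Λ σ w' j - condProb G A Λ τ w' j) 0)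
          * Bfn ε G (Λᶜ.erase w') {w'} x
        + Bfn ε G (Λᶜ.erase w') (Λ.filter (fun u => σ u ≠ τ u)) x := by
  have hfq : Nonempty (Fin q) := ⟨⟨0, hq⟩⟩
  have hune : (univ : Finset (Fin q)).Nonempty := univ_nonempty
  rw [Ef_tower G A hε1 hA hx hw' hxw σ f, Ef_tower G A hε1 hA hx hw' hxw τ f]
  have hsplit : (∑ j : Fin q, condProb G A Λ σ w' j
        * Ef G A (insert w' Λ) (Function.update σ w' j) x f)
      - (∑ j : Fin q, condProb G A Λ τ w' j
        * Ef G A (insert w' Λ) (Function.update τ w' j) x f)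
      = (∑ j : Fin q, (condProb G A Λ σ w' j - condProb G A Λ τ w' j)
          * Ef G A (insert w' Λ) (Function.update σ w' j) x f)
        + ∑ j : Fin q, condProb G A Λ τ w' j
          * (Ef G A (insert w' Λ) (Function.update σ w' j) x f
            - Ef G A (insert w' Λ) (Function.update τ w' j) x f) := by
    rw [← Finset.sum_add_distrib, ← Finset.sum_sub_distrib]
    apply Finset.sum_congr rfl
    intro j _
    ring
  rw [hsplit]
  refine (abs_add_le _ _).trans (add_le_add ?_ ?_)
  · -- term 1 : oscillation bound
    set Mx := univ.sup' hune (fun j => Ef G A (insert w' Λ) (Function.update σ w' j) x f)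
      with hMx
    set mn := univ.inf' hune (fun j => Ef G A (insert w' Λ) (Function.update σ w' j) x f)
      with hmn
    have hosc : Mx - mn ≤ Bfn ε G (Λᶜ.erase w') {w'} x := by
      obtain ⟨jM, _, hjM⟩ := Finset.exists_mem_eq_sup' hune
        (fun j => Ef G A (insert w' Λ) (Function.update σ w' j) x f)
      obtain ⟨jm, _, hjm⟩ := Finset.exists_mem_eq_inf' hune
        (fun j => Ef G A (insert w' Λ) (Function.update σ w' j) x f)
      rw [hMx, hjM, hmn, hjm]
      by_cases hjj : jM = jm
      · rw [hjj, sub_self]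
        exact Bfn_nonneg G hε0 _ _ _
      · have hDjj : (insert w' Λ).filter
            (fun u => Function.update σ w' jM u ≠ Function.update σ w' jm u) = {w'} := by
          ext u
          simp only [Finset.mem_filter, Finset.mem_insert, Finset.mem_singleton]
          constructor
          · rintro ⟨(rfl | huΛ), hne⟩
            · rfl
            · have hne' : u ≠ w' := fun e => hw' (by rwa [e] at huΛ)
              rw [Function.update_of_ne hne', Function.update_of_ne hne'] at hne
              exact absurd rfl hne
          · rintro rfl
            refine ⟨Or.inl rfl, ?_⟩
            rw [Function.update_self, Function.update_self]
            exact hjj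
        have := IH (Function.update σ w' jM) (Function.update σ w' jm)
        rw [hDjj] at this
        exact (le_abs_self _).trans this
    have habsP : ∑ j : Fin q, |condProb G A Λ σ w' j - condProb G A Λ τ w' j|
        = 2 * ∑ j : Fin q, max (condProb G A Λ σ w' j - condProb G A Λ τ w' j) 0 := by
      have hzero : ∑ j : Fin q, (condProb G A Λ σ w' j - condProb G A Λ τ w' j) = 0 := by
        rw [Finset.sum_sub_distrib, sum_condProb G A hε1 hA hw' σ,
          sum_condProb G A hε1 hA hw' τ]
        ring
      have hterm : ∀ j : Fin q, |condProb G A Λ σ w' j - condProb G A Λ τ w' j|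
          = 2 * max (condProb G A Λ σ w' j - condProb G A Λ τ w' j) 0
            - (condProb G A Λ σ w' j - condProb G A Λ τ w' j) := by
        intro j
        rcases le_total 0 (condProb G A Λ σ w' j - condProb G A Λ τ w' j) with hc | hc
        · rw [abs_of_nonneg hc, max_eq_left hc]; ring
        · rw [abs_of_nonpos hc, max_eq_right hc]; ring
      rw [Finset.sum_congr rfl (fun j _ => hterm j), Finset.sum_sub_distrib, hzero,
        sub_zero, Finset.mul_sum]
    have hzero : ∑ j : Fin q, (condProb G A Λ σ w' j - condProb G A Λ τ w' j) = 0 := by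
      rw [Finset.sum_sub_distrib, sum_condProb G A hε1 hA hw' σ,
        sum_condProb G A hε1 hA hw' τ]
      ring
    have hmid : ∀ j : Fin q,
        |Ef G A (insert w' Λ) (Function.update σ w' j) x f - (Mx + mn)/2|
          ≤ (Mx - mn)/2 := by
      intro j
      have h1 : Ef G A (insert w' Λ) (Function.update σ w' j) x f ≤ Mx := by
        rw [hMx]
        exact Finset.le_sup'
          (fun j => Ef G A (insert w' Λ) (Function.update σ w' j) x f) (Finset.mem_univ j)
      have h2 : mn ≤ Ef G A (insert w' Λ) (Function.update σ w' j) x f := by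
        rw [hmn]
        exact Finset.inf'_le
          (fun j => Ef G A (insert w' Λ) (Function.update σ w' j) x f) (Finset.mem_univ j)
      rw [abs_le]
      constructor <;> linarith
    have hrw : ∑ j : Fin q, (condProb G A Λ σ w' j - condProb G A Λ τ w' j)
          * Ef G A (insert w' Λ) (Function.update σ w' j) x f
        = ∑ j : Fin q, (condProb G A Λ σ w' j - condProb G A Λ τ w' j)
          * (Ef G A (insert w' Λ) (Function.update σ w' j) x f - (Mx + mn)/2) := by
      have expand : ∀ j : Fin q, (condProb G A Λ σ w' j - condProb G A Λ τ w' j)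
            * (Ef G A (insert w' Λ) (Function.update σ w' j) x f - (Mx + mn)/2)
          = (condProb G A Λ σ w' j - condProb G A Λ τ w' j)
              * Ef G A (insert w' Λ) (Function.update σ w' j) x f
            - (Mx + mn)/2 * (condProb G A Λ σ w' j - condProb G A Λ τ w' j) := by
        intro j; ring
      rw [Finset.sum_congr rfl (fun j _ => expand j), Finset.sum_sub_distrib,
        ← Finset.mul_sum, hzero, mul_zero, sub_zero]
    rw [hrw]
    refine (Finset.abs_sum_le_sum_abs _ _).trans ?_
    have hterm : ∀ j : Fin q, |(condProb G A Λ σ w' j - condProb G A Λ τ w' j)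
          * (Ef G A (insert w' Λ) (Function.update σ w' j) x f - (Mx + mn)/2)|
        ≤ |condProb G A Λ σ w' j - condProb G A Λ τ w' j| * ((Mx - mn)/2) := by
      intro j
      rw [abs_mul]
      exact mul_le_mul_of_nonneg_left (hmid j) (abs_nonneg _)
    refine (Finset.sum_le_sum (fun j _ => hterm j)).trans ?_
    rw [← Finset.sum_mul, habsP]
    have hosc0 : 0 ≤ ∑ j : Fin q, max (condProb G A Λ σ w' j - condProb G A Λ τ w' j) 0 :=
      Finset.sum_nonneg fun j _ => le_max_right _ _
    calc 2 * (∑ j : Fin q, max (condProb G A Λ σ w' j - condProb G A Λ τ w' j) 0)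
          * ((Mx - mn)/2)
        = (∑ j : Fin q, max (condProb G A Λ σ w' j - condProb G A Λ τ w' j) 0)
            * (Mx - mn) := by ring
      _ ≤ (∑ j : Fin q, max (condProb G A Λ σ w' j - condProb G A Λ τ w' j) 0)
            * Bfn ε G (Λᶜ.erase w') {w'} x := mul_le_mul_of_nonneg_left hosc hosc0
  · -- term 2 : conditional expectation of the smaller-system bound
    refine (Finset.abs_sum_le_sum_abs _ _).trans ?_
    have hQd : ∀ j : Fin q,
        |Ef G A (insert w' Λ) (Function.update σ w' j) x f
          - Ef G A (insert w' Λ) (Function.update τ w' j) x f|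
        ≤ Bfn ε G (Λᶜ.erase w') (Λ.filter (fun u => σ u ≠ τ u)) x := by
      intro j
      have hDj : (insert w' Λ).filter
          (fun u => Function.update σ w' j u ≠ Function.update τ w' j u)
          = Λ.filter (fun u => σ u ≠ τ u) := by
        ext u
        simp only [Finset.mem_filter, Finset.mem_insert]
        constructor
        · rintro ⟨(rfl | huΛ), hne⟩
          · rw [Function.update_self, Function.update_self] at hne
            exact absurd rfl hne
          · have hne' : u ≠ w' := fun e => hw' (by rwa [e] at huΛ)
            rw [Function.update_of_ne hne', Function.update_of_ne hne'] at hne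
            exact ⟨huΛ, hne⟩
        · rintro ⟨huΛ, hne⟩
          have hne' : u ≠ w' := fun e => hw' (by rwa [e] at huΛ)
          refine ⟨Or.inr huΛ, ?_⟩
          rwa [Function.update_of_ne hne', Function.update_of_ne hne']
      have := IH (Function.update σ w' j) (Function.update τ w' j)
      rwa [hDj] at this
    have hterm : ∀ j : Fin q, |condProb G A Λ τ w' j
          * (Ef G A (insert w' Λ) (Function.update σ w' j) x f
            - Ef G A (insert w' Λ) (Function.update τ w' j) x f)|
        ≤ condProb G A Λ τ w' j
            * Bfn ε G (Λᶜ.erase w') (Λ.filter (fun u => σ u ≠ τ u)) x := by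
      intro j
      rw [abs_mul, abs_of_nonneg (condProb_nonneg G A hε1 hA Λ τ w' j)]
      exact mul_le_mul_of_nonneg_left (hQd j) (condProb_nonneg G A hε1 hA Λ τ w' j)
    refine (Finset.sum_le_sum (fun j _ => hterm j)).trans ?_
    rw [← Finset.sum_mul, sum_condProb G A hε1 hA hw' τ, one_mul]

/-- Main estimate: strong spatial mixing with walk-sum bound. -/
lemma main_bound (hq : 0 < q) (hε0 : 0 ≤ ε) (hε1 : ε < 1) (hγ0 : 0 ≤ γ) (hγ1 : γ < 1)
    (hεγ : ε < 1 - γ) (hΔε : (Δ:ℝ) * ε ≤ γ)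
    (hdeg : MaxDegLE G Δ) (hA : ∀ i j, |A i j - 1| ≤ ε) :
    ∀ (n : ℕ) (Λ : Finset V), (Λᶜ : Finset V).card ≤ n →
      ∀ (σ τ : V → Fin q) (v : V), v ∉ Λ →
      ∀ (f : Fin q → ℝ), (∀ i, 0 ≤ f i) → (∀ i, f i ≤ 1) →
      |Ef G A Λ σ v f - Ef G A Λ τ v f|
        ≤ Bfn ε G (Λᶜ) (Λ.filter (fun u => σ u ≠ τ u)) v := by
  intro n
  induction n with
  | zero =>
    intro Λ hcard σ τ v hv f hf0 hf1
    exfalso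
    have h1 : v ∈ (Λᶜ : Finset V) := Finset.mem_compl.2 hv
    have h2 := Finset.card_pos.2 ⟨v, h1⟩
    omega
  | succ n ih =>
    intro Λ hcard σ τ v hv f hf0 hf1
    by_cases hsingle : ∀ x : V, x ≠ v → x ∈ Λ
    · -- base case: all other vertices fixed
      refine (Ef_base_diff G A hq hε0 hε1 hA hv hsingle σ τ f hf0 hf1).trans ?_
      have hset : (univ.filter (G.Adj v)).filter (fun u => σ u ≠ τ u)
          = (Λ.filter (fun u => σ u ≠ τ u)).filter (fun u => G.Adj v u) := by
        ext u
        simp only [Finset.mem_filter, Finset.mem_univ, true_and]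
        constructor
        · rintro ⟨h1, h2⟩
          exact ⟨⟨hsingle u h1.ne', h2⟩, h1⟩
        · rintro ⟨⟨_, h2⟩, h1⟩
          exact ⟨h1, h2⟩
      have h0 : ε * (((univ.filter (G.Adj v)).filter (fun u => σ u ≠ τ u)).card : ℝ)
          = walkS ε G (Λᶜ) (Λ.filter (fun u => σ u ≠ τ u)) 0 v := by
        simp only [walkS]
        rw [hset]
      rw [h0]
      exact walkS0_le_Bfn G hε0 hγ0 hγ1 hΔε hdeg _ _ v
    · push_neg at hsingle
      obtain ⟨w, hwv, hwΛ⟩ := hsingle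
      have hvU : v ∈ (Λᶜ : Finset V) := Finset.mem_compl.2 hv
      have hwU : w ∈ (Λᶜ : Finset V) := Finset.mem_compl.2 hwΛ
      have hcard' : ∀ w' : V, w' ∈ (Λᶜ : Finset V) → ((insert w' Λ)ᶜ : Finset V).card ≤ n := by
        intro w' hw'
        rw [Finset.compl_insert, Finset.card_erase_of_mem hw']
        have h1 : 0 < (Λᶜ : Finset V).card := Finset.card_pos.2 ⟨w', hw'⟩
        omega
      -- per-site total variation
      have hh0 : ∀ x : V, 0 ≤ ∑ j : Fin q,
          max (condProb G A Λ σ x j - condProb G A Λ τ x j) 0 :=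
        fun x => Finset.sum_nonneg fun j _ => le_max_right _ _
      -- |Ef difference| ≤ h x for [0,1]-observables
      have h1 : ∀ x : V, x ∉ Λ → ∀ (g : Fin q → ℝ), (∀ i, 0 ≤ g i) → (∀ i, g i ≤ 1) →
          |Ef G A Λ σ x g - Ef G A Λ τ x g|
            ≤ ∑ j : Fin q, max (condProb G A Λ σ x j - condProb G A Λ τ x j) 0 := by
        intro x hx g hg0 hg1
        have hzero : ∑ j : Fin q, (condProb G A Λ σ x j - condProb G A Λ τ x j) = 0 := by
          rw [Finset.sum_sub_distrib, sum_condProb G A hε1 hA hx σ,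
            sum_condProb G A hε1 hA hx τ]
          ring
        have hdiff : Ef G A Λ σ x g - Ef G A Λ τ x g
            = ∑ j : Fin q, g j * (condProb G A Λ σ x j - condProb G A Λ τ x j) := by
          unfold Ef
          rw [← Finset.sum_sub_distrib]
          exact Finset.sum_congr rfl fun j _ => by ring
        have hneg : ∑ j : Fin q, max (-(condProb G A Λ σ x j - condProb G A Λ τ x j)) 0
            = ∑ j : Fin q, max (condProb G A Λ σ x j - condProb G A Λ τ x j) 0 := by
          rw [Finset.sum_congr rfl (fun j _ => max_neg_zero _), Finset.sum_sub_distrib,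
            hzero, sub_zero]
        rw [hdiff, abs_le]
        constructor
        · rw [← hneg]
          have : ∀ j : Fin q, - max (-(condProb G A Λ σ x j - condProb G A Λ τ x j)) 0
              ≤ g j * (condProb G A Λ σ x j - condProb G A Λ τ x j) := by
            intro j
            rcases le_total 0 (condProb G A Λ σ x j - condProb G A Λ τ x j) with hc | hc
            · have := mul_nonneg (hg0 j) hc
              have hm : max (-(condProb G A Λ σ x j - condProb G A Λ τ x j)) 0 = 0 :=
                max_eq_right (by linarith)
              rw [hm]
              linarith
            · have hm : max (-(condProb G A Λ σ x j - condProb G A Λ τ x j)) 0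
                  = -(condProb G A Λ σ x j - condProb G A Λ τ x j) :=
                max_eq_left (by linarith)
              rw [hm, neg_neg]
              nlinarith [hg1 j, hg0 j]
          have hs := Finset.sum_le_sum (fun j (_ : j ∈ univ) => this j)
          rw [Finset.sum_neg_distrib] at hs
          linarith [hs]
        · have : ∀ j : Fin q, g j * (condProb G A Λ σ x j - condProb G A Λ τ x j)
              ≤ max (condProb G A Λ σ x j - condProb G A Λ τ x j) 0 := by
            intro j
            rcases le_total 0 (condProb G A Λ σ x j - condProb G A Λ τ x j) with hc | hc
            · rw [max_eq_left hc]
              nlinarith [hg1 j, hg0 j]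
            · rw [max_eq_right hc]
              exact mul_nonpos_of_nonneg_of_nonpos (hg0 j) hc
          exact Finset.sum_le_sum (fun j _ => this j)
      -- attainment of h x
      have h2 : ∀ x : V, ∃ g : Fin q → ℝ, (∀ i, 0 ≤ g i) ∧ (∀ i, g i ≤ 1) ∧
          (∑ j : Fin q, max (condProb G A Λ σ x j - condProb G A Λ τ x j) 0)
            = Ef G A Λ σ x g - Ef G A Λ τ x g := by
        intro x
        refine ⟨fun j => if 0 ≤ condProb G A Λ σ x j - condProb G A Λ τ x j then 1 else 0,
          fun i => by dsimp only; split <;> norm_num,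
          fun i => by dsimp only; split <;> norm_num, ?_⟩
        unfold Ef
        rw [← Finset.sum_sub_distrib]
        apply Finset.sum_congr rfl
        intro j _
        dsimp only
        rcases le_or_gt 0 (condProb G A Λ σ x j - condProb G A Λ τ x j) with hc | hc
        · rw [if_pos hc, max_eq_left hc]
          ring
        · rw [if_neg (not_le.2 hc), max_eq_right hc.le]
          ring
      -- the recursion inequality
      have hrec : ∀ x ∈ (Λᶜ : Finset V), ∀ w' ∈ (Λᶜ : Finset V), w' ≠ x →
          (∑ j : Fin q, max (condProb G A Λ σ x j - condProb G A Λ τ x j) 0)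
              - Bfn ε G (Λᶜ) (Λ.filter (fun u => σ u ≠ τ u)) x
            ≤ Bfn ε G (Λᶜ.erase w') {w'} x *
              ((∑ j : Fin q, max (condProb G A Λ σ w' j - condProb G A Λ τ w' j) 0)
                - Bfn ε G (Λᶜ) (Λ.filter (fun u => σ u ≠ τ u)) w') := by
        intro x hxU w' hw'U hw'x
        have hxΛ : x ∉ Λ := Finset.mem_compl.1 hxU
        have hw'Λ : w' ∉ Λ := Finset.mem_compl.1 hw'U
        obtain ⟨gx, hgx0, hgx1, hgx⟩ := h2 x
        have hIH : ∀ σ' τ' : V → Fin q,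
            |Ef G A (insert w' Λ) σ' x gx - Ef G A (insert w' Λ) τ' x gx|
              ≤ Bfn ε G (Λᶜ.erase w')
                  ((insert w' Λ).filter (fun u => σ' u ≠ τ' u)) x := by
          intro σ' τ'
          have hxΛ' : x ∉ insert w' Λ := by
            simp only [Finset.mem_insert]
            rintro (rfl | hmem)
            exacts [hw'x rfl, hxΛ hmem]
          have := ih (insert w' Λ) (hcard' w' hw'U) σ' τ' x hxΛ' gx hgx0 hgx1
          rwa [Finset.compl_insert] at this
        have hb := step_bound G A hq hε0 hε1 hγ0 hγ1 hΔε hdeg hA hxΛ hw'Λ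
          (Ne.symm hw'x) σ τ gx hgx0 hgx1 hIH
        rw [← hgx] at hb
        have hb' : (∑ j : Fin q, max (condProb G A Λ σ x j - condProb G A Λ τ x j) 0)
            ≤ (∑ j : Fin q, max (condProb G A Λ σ w' j - condProb G A Λ τ w' j) 0)
                * Bfn ε G (Λᶜ.erase w') {w'} x
              + Bfn ε G (Λᶜ.erase w') (Λ.filter (fun u => σ u ≠ τ u)) x :=
          (le_abs_self _).trans hb
        have helim := Bfn_elim G hε0 hγ0 hγ1 hΔε hdeg (Λᶜ)
          (Λ.filter (fun u => σ u ≠ τ u)) hw'U x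
        have hexp : Bfn ε G (Λᶜ.erase w') {w'} x *
            ((∑ j : Fin q, max (condProb G A Λ σ w' j - condProb G A Λ τ w' j) 0)
                - Bfn ε G (Λᶜ) (Λ.filter (fun u => σ u ≠ τ u)) w')
            = ((∑ j : Fin q, max (condProb G A Λ σ w' j - condProb G A Λ τ w' j) 0)
                * Bfn ε G (Λᶜ.erase w') {w'} x
              + Bfn ε G (Λᶜ.erase w') (Λ.filter (fun u => σ u ≠ τ u)) x)
              - (Bfn ε G (Λᶜ.erase w') {w'} x
                  * Bfn ε G (Λᶜ) (Λ.filter (fun u => σ u ≠ τ u)) w'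
                + Bfn ε G (Λᶜ.erase w') (Λ.filter (fun u => σ u ≠ τ u)) x) := by
          ring
        rw [hexp, ← helim]
        linarith [hb']
      -- sup argument
      have hUne : (Λᶜ : Finset V).Nonempty := ⟨v, hvU⟩
      obtain ⟨x1, hx1U, hx1⟩ := Finset.exists_mem_eq_sup' hUne
        (fun x => (∑ j : Fin q, max (condProb G A Λ σ x j - condProb G A Λ τ x j) 0)
          - Bfn ε G (Λᶜ) (Λ.filter (fun u => σ u ≠ τ u)) x)
      have hMle : ∀ x ∈ (Λᶜ : Finset V),
          (∑ j : Fin q, max (condProb G A Λ σ x j - condProb G A Λ τ x j) 0)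
            - Bfn ε G (Λᶜ) (Λ.filter (fun u => σ u ≠ τ u)) x
          ≤ (∑ j : Fin q, max (condProb G A Λ σ x1 j - condProb G A Λ τ x1 j) 0)
            - Bfn ε G (Λᶜ) (Λ.filter (fun u => σ u ≠ τ u)) x1 := by
        intro x hx
        rw [← hx1]
        exact Finset.le_sup'
          (fun x => (∑ j : Fin q, max (condProb G A Λ σ x j - condProb G A Λ τ x j) 0)
            - Bfn ε G (Λᶜ) (Λ.filter (fun u => σ u ≠ τ u)) x) hx
      have hM0 : (∑ j : Fin q, max (condProb G A Λ σ x1 j - condProb G A Λ τ x1 j) 0)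
          - Bfn ε G (Λᶜ) (Λ.filter (fun u => σ u ≠ τ u)) x1 ≤ 0 := by
        by_contra hMpos
        push_neg at hMpos
        have hw1 : ∃ w1, w1 ∈ (Λᶜ : Finset V) ∧ w1 ≠ x1 := by
          by_cases hxv : x1 = v
          · exact ⟨w, hwU, by rw [hxv]; exact hwv⟩
          · exact ⟨v, hvU, fun e => hxv (e.symm)⟩
        obtain ⟨w1, hw1U, hw1ne⟩ := hw1
        have hkey := hrec x1 hx1U w1 hw1U hw1ne
        have hle2 := hMle w1 hw1U
        have hA1lt : Bfn ε G (Λᶜ.erase w1) {w1} x1 < 1 := by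
          refine lt_of_le_of_lt (Bfn_single_le G hε0 hγ0 hγ1 hΔε hdeg _ w1 x1) ?_
          rw [div_lt_one (by linarith : (0:ℝ) < 1 - γ)]
          linarith
        have hA1nn : 0 ≤ Bfn ε G (Λᶜ.erase w1) {w1} x1 := Bfn_nonneg G hε0 _ _ _
        nlinarith [mul_le_mul_of_nonneg_left hle2 hA1nn]
      have hfinal := h1 v hv f hf0 hf1
      have hvle := hMle v hvU
      linarith
end Main


/-- Let `Δ ≥ 3`, `q ≥ 2`, `0 < α < 2π/(3Δ)` and
`δ_Δ = sin(α/2)·cos(αΔ/2)`.  Fix `η ∈ (0,1)`.  Then for any real symmetric `q × q`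
matrix `A` with `|A_{ij} − 1| < (1−η)δ_Δ` for all `i, j`, the graph homomorphism measure
`μ_{G,A}` satisfies strong spatial mixing on the family of all graphs of maximum degree
at most `Δ` with exponential rate `1/(1−η)`:  there is `C > 0` such that for all such
`G`, all `v`, `i`, `Λ ⊆ V ∖ {v}` and boundary conditions `σ, τ` on `Λ`,
`|Pr[Ψ(v)=i ∣ σ] − Pr[Ψ(v)=i ∣ τ]| ≤ C (1−η)^{d_G(v,σ≠τ)}`. -/
theorem SSM_graph_homomorphisms
    (Δ q : ℕ) (hΔ : 3 ≤ Δ) (hq : 2 ≤ q)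
    (α : ℝ) (hα0 : 0 < α) (hα1 : α < 2 * Real.pi / (3 * Δ))
    (η : ℝ) (hη : η ∈ Set.Ioo (0 : ℝ) 1)
    (A : Matrix (Fin q) (Fin q) ℝ) (hsymm : ∀ i j, A i j = A j i)
    (hA : ∀ i j, |A i j - 1| < (1 - η) * (Real.sin (α / 2) * Real.cos (α * Δ / 2))) :
    ∃ C > 0, ∀ (V : Type) (_ : Fintype V) (G : SimpleGraph V), MaxDegLE G Δ →
      ∀ (v : V) (i : Fin q) (Λ : Finset V), v ∉ Λ → ∀ σ τ : V → Fin q,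
        ∀ d : ℕ, (∀ u ∈ Λ, σ u ≠ τ u → (d : ℕ∞) ≤ G.edist v u) →
          |condProb G A Λ σ v i - condProb G A Λ τ v i| ≤ C * (1 - η) ^ d := by
  obtain ⟨hη0, hη1⟩ := hη
  set δ : ℝ := Real.sin (α/2) * Real.cos (α * (Δ:ℝ) / 2) with hδ
  set ε : ℝ := (1 - η) * δ with hε
  set γ : ℝ := (Δ:ℝ) * ε with hγ
  have hΔ3 : (3:ℝ) ≤ (Δ:ℝ) := by exact_mod_cast hΔ
  have hπ3 : (3:ℝ) < Real.pi := Real.pi_gt_three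
  have hαΔ : α * (Δ:ℝ) / 2 < Real.pi / 3 := by
    have h3Δ : (0:ℝ) < 3 * (Δ:ℝ) := by positivity
    have := (lt_div_iff₀ h3Δ).1 hα1
    nlinarith
  have hαsmall : α < Real.pi := by nlinarith
  have hsin0 : 0 < Real.sin (α/2) :=
    Real.sin_pos_of_pos_of_lt_pi (by linarith) (by linarith)
  have hcos0 : 0 < Real.cos (α * (Δ:ℝ)/2) := by
    apply Real.cos_pos_of_mem_Ioo
    constructor
    · have : (0:ℝ) < α * (Δ:ℝ)/2 := by positivity
      linarith
    · linarith
  have hδ0 : 0 < δ := mul_pos hsin0 hcos0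
  have hε0 : 0 < ε := mul_pos (by linarith) hδ0
  have hkey : (Δ:ℝ) * δ ≤ 3/4 := by
    rw [hδ]
    exact GraphHomAux.deg_sin_cos_le hΔ hα0 hα1
  have hγlt : γ < 3/4 := by
    rw [hγ, hε]
    calc (Δ:ℝ) * ((1-η)*δ) = (1-η) * ((Δ:ℝ)*δ) := by ring
      _ ≤ (1-η) * (3/4) := by
          apply mul_le_mul_of_nonneg_left hkey (by linarith)
      _ < 3/4 := by nlinarith
  have hγ0 : 0 ≤ γ := by
    rw [hγ]
    exact mul_nonneg (Nat.cast_nonneg Δ) hε0.le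
  have hγ1 : γ < 1 := by linarith
  have hγη : γ ≤ 1 - η := by
    rw [hγ, hε]
    have h1 : (Δ:ℝ) * ((1-η)*δ) = (1-η) * ((Δ:ℝ)*δ) := by ring
    rw [h1]
    nlinarith
  have h3ε : (3:ℝ) * ε ≤ γ := by
    rw [hγ]
    nlinarith
  have hεγ : ε < 1 - γ := by linarith
  have hε1 : ε < 1 := by linarith
  have h1γpos : (0:ℝ) < 1 - γ := by linarith
  refine ⟨1/(1-γ), by positivity, ?_⟩
  intro V instV G hGdeg v i Λ hv σ τ d hd
  letI : Fintype V := instV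
  have hq0 : 0 < q := by omega
  have hADle : ∀ a b, |A a b - 1| ≤ ε := by
    intro a b
    rw [hε, hδ]
    exact (hA a b).le
  have hind : ∀ j : Fin q, (0:ℝ) ≤ (fun j => if j = i then (1:ℝ) else 0) j := by
    intro j; dsimp only; split <;> norm_num
  have hind1 : ∀ j : Fin q, (fun j => if j = i then (1:ℝ) else 0) j ≤ 1 := by
    intro j; dsimp only; split <;> norm_num
  have hmain := main_bound G A hq0 hε0.le hε1 hγ0 hγ1 hεγ hγ.ge hGdeg hADle
    ((Λᶜ : Finset V).card) Λ le_rfl σ τ v hv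
    (fun j => if j = i then (1:ℝ) else 0) hind hind1
  have hEf : ∀ ρ : V → Fin q,
      Ef G A Λ ρ v (fun j => if j = i then (1:ℝ) else 0) = condProb G A Λ ρ v i := by
    intro ρ
    unfold Ef
    have hterm : ∀ j : Fin q, (if j = i then (1:ℝ) else 0) * condProb G A Λ ρ v j
        = if j = i then condProb G A Λ ρ v j else 0 := by
      intro j; split <;> simp
    rw [Finset.sum_congr rfl (fun j _ => hterm j), Finset.sum_ite_eq' univ i
      (fun j => condProb G A Λ ρ v j), if_pos (Finset.mem_univ i)]
  rw [hEf σ, hEf τ] at hmain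
  have hfar : ∀ u ∈ Λ.filter (fun u => σ u ≠ τ u), (d : ℕ∞) ≤ G.edist v u := by
    intro u hu
    obtain ⟨huΛ, hune⟩ := Finset.mem_filter.1 hu
    exact hd u huΛ hune
  have hB := Bfn_le_pow G hε0.le hγ0 hγ1 hγ.ge hGdeg (Λᶜ)
    (Λ.filter (fun u => σ u ≠ τ u)) v d hfar
  refine (hmain.trans hB).trans ?_
  have hpow : γ ^ d ≤ (1 - η) ^ d := pow_le_pow_left₀ hγ0 hγη d
  calc γ ^ d / (1 - γ) ≤ (1 - η) ^ d / (1 - γ) := (div_le_div_iff_of_pos_right h1γpos).2 hpow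
    _ = 1/(1-γ) * (1-η)^d := by ring

end GraphHom

end
end

section
/- Let ε > 0 and let P(z) = ∑_{k≥0} a_k z^k and Q(z) = ∑_{k≥0} b_k z^k be holomorphic functions on an open set containing 𝒩([0,1], 2ε) = {z ∈ ℂ : dist(z,[0,1]) ≤ 2ε}, with a_k = b_k for k = 0, …, N for some N ∈ ℕ. If there is M > 0 such that |P(z)| ≤ M and |Q(z)| ≤ M for all z ∈ 𝒩([0,1], 2ε), then, with r = (1 − e^{−1−1/ε})/(1 − e^{−1/ε}) (which satisfies r > 1), one has |P(1) − Q(1)| ≤ 2M/((r−1)·r^N). -/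
/-- The `ε`-neighbourhood `𝒩(S, ε) = {z ∈ ℂ : dist(z, S) ≤ ε}` of a set `S ⊆ ℂ`. -/
def cnbhd (S : Set ℂ) (ε : ℝ) : Set ℂ := {z : ℂ | Metric.infDist z S ≤ ε}

/-- The unit interval `[0,1]` viewed as a subset of `ℂ`. -/
def unitInterval' : Set ℂ := (fun x : ℝ => (x : ℂ)) '' Set.Icc 0 1

open Complex Metric

/-- Geometric key lemma: `w ↦ -ε log(1-w)` maps the closed disk of radius
`1 - exp(-1-1/ε)` into the `2ε`-stadium around `[0,1]`. -/
lemma phi_mem_stadium (ε : ℝ) (hε : 0 < ε) (w : ℂ)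
    (hw : ‖w‖ ≤ 1 - Real.exp (-1 - 1/ε)) :
    -(ε:ℂ) * Complex.log (1 - w) ∈ cnbhd unitInterval' (2*ε) := by
  have hexppos : 0 < Real.exp (-1 - 1/ε) := Real.exp_pos _
  have hwlt : ‖w‖ < 1 := by linarith
  set ζ : ℂ := 1 - w with hζdef
  have hζlow : Real.exp (-1 - 1/ε) ≤ ‖ζ‖ := by
    have h1 : (1:ℝ) - ‖w‖ ≤ ‖ζ‖ := by
      have := norm_sub_norm_le (1:ℂ) w
      simpa using this
    linarith
  have hζpos : 0 < ‖ζ‖ := lt_of_lt_of_le hexppos hζlow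
  have hζhi : ‖ζ‖ ≤ 2 := by
    have := norm_sub_le (1:ℂ) w
    simp only [norm_one] at this
    linarith
  have hζre : 0 < ζ.re := by
    have h1 : |w.re| ≤ ‖w‖ := Complex.abs_re_le_norm w
    have : ζ.re = 1 - w.re := by simp [hζdef]
    rw [this]
    have := abs_le.mp h1
    linarith
  set L : ℂ := Complex.log ζ with hLdef
  have hLre_ub : L.re ≤ Real.log 2 := by
    rw [hLdef, Complex.log_re]
    exact Real.log_le_log hζpos hζhi
  have hLre_lb : -1 - 1/ε ≤ L.re := by
    rw [hLdef, Complex.log_re]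
    calc -1 - 1/ε = Real.log (Real.exp (-1 - 1/ε)) := (Real.log_exp _).symm
      _ ≤ Real.log ‖ζ‖ := Real.log_le_log hexppos hζlow
  have hLim : |L.im| ≤ Real.pi / 2 := by
    rw [hLdef, Complex.log_im]
    exact Complex.abs_arg_le_pi_div_two_iff.mpr hζre.le
  set x : ℝ := -ε * L.re with hxdef
  set y : ℝ := -ε * L.im with hydef
  have hre' : ((-(ε:ℂ)) * L).re = x := by simp [hxdef, Complex.mul_re]
  have him' : ((-(ε:ℂ)) * L).im = y := by simp [hydef, Complex.mul_im]
  have hx_ub : x ≤ ε + 1 := by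
    have h1 : -ε * L.re ≤ -ε * (-1 - 1/ε) := by
      apply mul_le_mul_of_nonpos_left hLre_lb (by linarith)
    have h2 : -ε * (-1 - 1/ε) = ε + 1 := by field_simp; ring
    rw [hxdef]; linarith [h1, h2.le]
  have hx_lb : -(ε * Real.log 2) ≤ x := by
    have h1 : -ε * Real.log 2 ≤ -ε * L.re := by
      apply mul_le_mul_of_nonpos_left hLre_ub (by linarith)
    rw [hxdef]; linarith
  have hy2 : y^2 ≤ (ε * (Real.pi/2))^2 := by
    have h1 : |y| ≤ ε * (Real.pi/2) := by
      rw [hydef, abs_mul, abs_neg, abs_of_pos hε]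
      exact mul_le_mul_of_nonneg_left hLim hε.le
    nlinarith [abs_nonneg y, _root_.sq_abs y]
  clear_value ζ L x y
  have key : ∀ t : ℝ, 0 ≤ t → t ≤ 1 → (x - t)^2 + y^2 ≤ (2*ε)^2 →
      Metric.infDist ((-(ε:ℂ)) * L) unitInterval' ≤ 2*ε := by
    intro t ht0 ht1 hdist
    have hmem : (t:ℂ) ∈ unitInterval' := ⟨t, ⟨ht0, ht1⟩, rfl⟩
    refine le_trans (Metric.infDist_le_dist_of_mem hmem) ?_
    rw [Complex.dist_eq, Complex.norm_def, Complex.normSq_apply]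
    have e1 : ((-(ε:ℂ)) * L - (t:ℂ)).re = x - t := by
      rw [Complex.sub_re, hre', Complex.ofReal_re]
    have e2 : ((-(ε:ℂ)) * L - (t:ℂ)).im = y := by
      rw [Complex.sub_im, him', Complex.ofReal_im, sub_zero]
    rw [e1, e2]
    have : (x - t) * (x - t) + y * y ≤ (2*ε)^2 := by nlinarith
    calc Real.sqrt ((x - t) * (x - t) + y * y) ≤ Real.sqrt ((2*ε)^2) :=
          Real.sqrt_le_sqrt this
      _ = 2*ε := Real.sqrt_sq (by linarith)
  have hlog2pos : 0 < Real.log 2 := Real.log_pos (by norm_num)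
  have hlog2 : Real.log 2 ≤ 0.7 := by linarith [Real.log_two_lt_d9]
  have hpipos : 0 < Real.pi := Real.pi_pos
  have hpi : Real.pi ≤ 3.15 := Real.pi_lt_d2.le
  have hL2 : (Real.log 2)^2 ≤ 0.49 := by nlinarith
  have hP2 : (Real.pi/2)^2 ≤ 2.4807 := by nlinarith
  have hy2' : y^2 ≤ ε^2 * 2.4807 := by
    have : (ε*(Real.pi/2))^2 = ε^2 * (Real.pi/2)^2 := by ring
    have h := mul_le_mul_of_nonneg_left hP2 (sq_nonneg ε)
    linarith
  have hεsq : 0 ≤ ε^2 := sq_nonneg ε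
  show Metric.infDist ((-(ε:ℂ)) * L) unitInterval' ≤ 2*ε
  rcases le_or_gt x 0 with hx0 | hx0
  · refine key 0 le_rfl zero_le_one ?_
    have hb : 0 ≤ ε * Real.log 2 := by positivity
    have ha : x^2 ≤ (ε * Real.log 2)^2 := sq_le_sq' hx_lb (by linarith)
    have ha' : x^2 ≤ ε^2 * 0.49 := by
      have heq : (ε * Real.log 2)^2 = ε^2 * (Real.log 2)^2 := by ring
      have h := mul_le_mul_of_nonneg_left hL2 (sq_nonneg ε)
      linarith
    have hgoal : (2*ε)^2 = 4*ε^2 := by ring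
    have e : (x-0)^2 = x^2 := by ring
    rw [e, hgoal]; linarith
  · rcases le_or_gt x 1 with hx1 | hx1
    · refine key x hx0.le hx1 ?_
      have hgoal : (2*ε)^2 = 4*ε^2 := by ring
      have e : (x-x)^2 = 0 := by ring
      rw [e, hgoal]; linarith
    · refine key 1 zero_le_one le_rfl ?_
      have hx2 : (x-1)^2 ≤ ε^2 := by
        have h1 : -ε ≤ x - 1 := by linarith
        have h2 : x - 1 ≤ ε := by linarith
        exact sq_le_sq' h1 h2
      have hgoal : (2*ε)^2 = 4*ε^2 := by ring
      rw [hgoal]; linarith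

/-- Taylor coefficients from a power series representation. -/
lemma coeff_eq_iteratedDeriv {f : ℂ → ℂ} {p : FormalMultilinearSeries ℂ ℂ ℂ} {x : ℂ}
    (h : HasFPowerSeriesAt f p x) (n : ℕ) :
    (n.factorial : ℂ) * p.coeff n = iteratedDeriv n f x := by
  obtain ⟨r, hr⟩ := h
  have h1 := hr.factorial_smul (y := (1:ℂ)) n
  rw [iteratedDeriv_eq_iteratedFDeriv, ← h1, nsmul_eq_mul]
  rfl

/-- Let `ε > 0` and let `P, Q` be holomorphic on an open set containing
`𝒩([0,1], 2ε)`, with equal Taylor coefficients at `0` up to order `N`, and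
`|P|, |Q| ≤ M` on `𝒩([0,1], 2ε)`.  Then, with `r = (1 − e^{−1−1/ε})/(1 − e^{−1/ε})`
(which satisfies `r > 1`), one has `|P(1) − Q(1)| ≤ 2M/((r−1)·r^N)`. -/
theorem bound_strip (ε : ℝ) (hε : 0 < ε) (P Q : ℂ → ℂ)
    (U : Set ℂ) (hUopen : IsOpen U) (hUN : cnbhd unitInterval' (2 * ε) ⊆ U)
    (hP : DifferentiableOn ℂ P U) (hQ : DifferentiableOn ℂ Q U)
    (N : ℕ) (hcoef : ∀ k ≤ N, iteratedDeriv k P 0 = iteratedDeriv k Q 0)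
    (M : ℝ) (hM : 0 < M)
    (hPb : ∀ z ∈ cnbhd unitInterval' (2 * ε), ‖P z‖ ≤ M)
    (hQb : ∀ z ∈ cnbhd unitInterval' (2 * ε), ‖Q z‖ ≤ M) :
    let r : ℝ := (1 - Real.exp (-1 - 1 / ε)) / (1 - Real.exp (-(1 / ε)))
    1 < r ∧ ‖P 1 - Q 1‖ ≤ 2 * M / ((r - 1) * r ^ N) := by
  intro r
  have hr : r = (1 - Real.exp (-1 - 1 / ε)) / (1 - Real.exp (-(1 / ε))) := rfl
  set τ : ℝ := 1 - Real.exp (-(1/ε)) with hτdef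
  set R : ℝ := 1 - Real.exp (-1 - 1/ε) with hRdef
  have hεinv : 0 < 1/ε := by positivity
  have hexp1 : Real.exp (-1 - 1/ε) < Real.exp (-(1/ε)) := by
    apply Real.exp_lt_exp.mpr; linarith
  have hexp2 : Real.exp (-(1/ε)) < 1 := by
    rw [Real.exp_lt_one_iff]; linarith
  have hexp3 : 0 < Real.exp (-1 - 1/ε) := Real.exp_pos _
  have hτpos : 0 < τ := by rw [hτdef]; linarith
  have hτR : τ < R := by rw [hτdef, hRdef]; linarith
  have hRpos : 0 < R := lt_trans hτpos hτR
  have hR1 : R < 1 := by rw [hRdef]; linarith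
  have h1r : 1 < r := by
    rw [hr]
    rw [lt_div_iff₀ (by linarith : (0:ℝ) < 1 - Real.exp (-(1/ε)))]
    rw [one_mul]
    linarith
  refine ⟨h1r, ?_⟩
  -- the difference function
  set f : ℂ → ℂ := fun z => P z - Q z with hfdef
  have h0mem : (0:ℂ) ∈ cnbhd unitInterval' (2*ε) := by
    have h0u : (0:ℂ) ∈ unitInterval' := ⟨0, ⟨le_refl 0, zero_le_one⟩, by simp⟩
    have : Metric.infDist (0:ℂ) unitInterval' = 0 := Metric.infDist_zero_of_mem h0u
    show Metric.infDist (0:ℂ) unitInterval' ≤ 2*ε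
    rw [this]; positivity
  have hfd : DifferentiableOn ℂ f U := hP.sub hQ
  have hf2M : ∀ z ∈ cnbhd unitInterval' (2*ε), ‖f z‖ ≤ 2*M := by
    intro z hz
    calc ‖P z - Q z‖ ≤ ‖P z‖ + ‖Q z‖ := norm_sub_le _ _
      _ ≤ M + M := by
          have h1 := hPb z hz; have h2 := hQb z hz
          exact add_le_add h1 h2
      _ = 2*M := by ring
  have hU0 : U ∈ nhds (0:ℂ) := hUopen.mem_nhds (hUN h0mem)
  obtain ⟨pP, hpP⟩ : AnalyticAt ℂ P 0 := hP.analyticAt hU0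
  obtain ⟨pQ, hpQ⟩ : AnalyticAt ℂ Q 0 := hQ.analyticAt hU0
  have hpf : HasFPowerSeriesAt f (pP - pQ) 0 := hpP.sub hpQ
  have hvan : ∀ k ≤ N, (pP - pQ) k = 0 := by
    intro k hk
    have h1 := coeff_eq_iteratedDeriv hpP k
    have h2 := coeff_eq_iteratedDeriv hpQ k
    have h3 : (k.factorial : ℂ) * pP.coeff k = (k.factorial : ℂ) * pQ.coeff k := by
      rw [h1, h2, hcoef k hk]
    have hne : (k.factorial : ℂ) ≠ 0 := Nat.cast_ne_zero.mpr k.factorial_ne_zero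
    have h4 : pP.coeff k = pQ.coeff k := mul_left_cancel₀ hne h3
    have h5 : (pP - pQ).coeff k = pP.coeff k - pQ.coeff k := rfl
    rw [← FormalMultilinearSeries.coeff_eq_zero, h5, h4, sub_self]
  -- the conformal-type map φ
  set φ : ℂ → ℂ := fun w => -(ε:ℂ) * Complex.log (1 - w) with hφdef
  have hφ0 : φ 0 = 0 := by simp [hφdef]
  obtain ⟨pφ, hpφ⟩ : AnalyticAt ℂ φ 0 := by
    apply AnalyticAt.mul analyticAt_const
    apply AnalyticAt.clog (analyticAt_const.sub analyticAt_id)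
    simp [Complex.mem_slitPlane_iff]
  have hpf' : HasFPowerSeriesAt f (pP - pQ) (φ 0) := by rw [hφ0]; exact hpf
  have hcomp : HasFPowerSeriesAt (f ∘ φ) ((pP - pQ).comp pφ) 0 := hpf'.comp hpφ
  -- differentiability of f ∘ φ on the closed disk of radius R
  have hmapS : ∀ w : ℂ, ‖w‖ ≤ R → φ w ∈ cnbhd unitInterval' (2*ε) := by
    intro w hw
    exact phi_mem_stadium ε hε w hw
  have hgdiff : DifferentiableOn ℂ (f ∘ φ) (Metric.closedBall (0:ℂ) R) := by
    intro w hw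
    have hwR : ‖w‖ ≤ R := by
      rw [Metric.mem_closedBall, Complex.dist_eq, sub_zero] at hw
      exact hw
    have hslit : (1:ℂ) - w ∈ Complex.slitPlane := by
      rw [Complex.mem_slitPlane_iff]
      left
      have h1 : |w.re| ≤ ‖w‖ := Complex.abs_re_le_norm w
      have h2 : ((1:ℂ) - w).re = 1 - w.re := by simp
      rw [h2]
      have := abs_le.mp h1
      linarith
    have hφd : DifferentiableAt ℂ φ w := by
      apply DifferentiableAt.mul (differentiableAt_const _)
      exact DifferentiableAt.clog ((differentiableAt_const _).sub differentiableAt_id) hslit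
    have hfd' : DifferentiableAt ℂ f (φ w) :=
      hfd.differentiableAt (hUopen.mem_nhds (hUN (hmapS w hwR)))
    exact (hfd'.comp w hφd).differentiableWithinAt
  -- power series of f ∘ φ on the ball of radius R
  set Rnn : NNReal := ⟨R, hRpos.le⟩ with hRnndef
  have hRnncoe : (Rnn : ℝ) = R := rfl
  have hRnnpos : 0 < Rnn := by
    rw [← NNReal.coe_pos, hRnncoe]; exact hRpos
  have hg : HasFPowerSeriesOnBall (f ∘ φ) (cauchyPowerSeries (f ∘ φ) 0 Rnn) 0 Rnn := by
    apply DifferentiableOn.hasFPowerSeriesOnBall _ hRnnpos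
    rw [hRnncoe]; exact hgdiff
  set q : FormalMultilinearSeries ℂ ℂ ℂ := cauchyPowerSeries (f ∘ φ) 0 Rnn with hqdef
  have hqe : q = (pP - pQ).comp pφ :=
    hg.hasFPowerSeriesAt.eq_formalMultilinearSeries hcomp
  -- low coefficients of q vanish
  have hqzero : ∀ n ≤ N, q n = 0 := by
    intro n hn
    rw [hqe]
    show ∑ c : Composition n, (pP - pQ).compAlongComposition pφ c = 0
    apply Finset.sum_eq_zero
    intro c _
    have hzero : (pP - pQ) c.length = 0 := hvan c.length (le_trans c.length_le hn)
    ext v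
    rw [FormalMultilinearSeries.compAlongComposition_apply, hzero]
    simp
  -- coefficient bounds
  have hqnorm : ∀ n, ‖q n‖ ≤ (2*M) / R^n := by
    intro n
    have hb := norm_cauchyPowerSeries_le (f ∘ φ) 0 (Rnn : ℝ) n
    have hcont : Continuous fun θ:ℝ => ‖(f ∘ φ) (circleMap 0 (Rnn:ℝ) θ)‖ := by
      apply Continuous.norm
      apply hgdiff.continuousOn.comp_continuous (continuous_circleMap 0 _)
      intro θ
      rw [hRnncoe]
      exact circleMap_mem_closedBall 0 hRpos.le θ
    have hint : (∫ θ in (0:ℝ)..2*Real.pi, ‖(f ∘ φ) (circleMap 0 (Rnn:ℝ) θ)‖)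
        ≤ 2*Real.pi * (2*M) := by
      have hle : ∀ θ ∈ Set.Icc (0:ℝ) (2*Real.pi),
          ‖(f ∘ φ) (circleMap 0 (Rnn:ℝ) θ)‖ ≤ 2*M := by
        intro θ _
        apply hf2M
        apply hmapS
        rw [hRnncoe]
        have : ‖circleMap 0 R θ‖ = |R| := by
          exact norm_circleMap_zero R θ
        rw [this, abs_of_pos hRpos]
      calc (∫ θ in (0:ℝ)..2*Real.pi, ‖(f ∘ φ) (circleMap 0 (Rnn:ℝ) θ)‖)
          ≤ ∫ _ in (0:ℝ)..2*Real.pi, 2*M := by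
            apply intervalIntegral.integral_mono_on Real.two_pi_pos.le
              (hcont.intervalIntegrable _ _) (intervalIntegrable_const) hle
        _ = 2*Real.pi * (2*M) := by
            rw [intervalIntegral.integral_const, smul_eq_mul]; ring
    have habsR : |(Rnn:ℝ)| = R := by rw [hRnncoe]; exact abs_of_pos hRpos
    calc ‖q n‖ ≤ ((2*Real.pi)⁻¹ * ∫ θ in (0:ℝ)..2*Real.pi,
            ‖(f ∘ φ) (circleMap 0 (Rnn:ℝ) θ)‖) * |(Rnn:ℝ)|⁻¹ ^ n := hb
      _ ≤ ((2*Real.pi)⁻¹ * (2*Real.pi * (2*M))) * |(Rnn:ℝ)|⁻¹ ^ n := by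
          apply mul_le_mul_of_nonneg_right
            (mul_le_mul_of_nonneg_left hint (by positivity)) (by positivity)
      _ = (2*M) / R^n := by
          rw [habsR]
          rw [inv_pow]
          field_simp
  -- τ is in the ball
  have hτR' : ‖((τ:ℝ):ℂ)‖ < R := by
    rw [Complex.norm_real, Real.norm_eq_abs, abs_of_pos hτpos]; exact hτR
  have hτball : ((τ:ℝ):ℂ) ∈ Metric.eball (0:ℂ) (Rnn : ENNReal) := by
    rw [mem_emetric_ball_zero_iff]
    rw [show ((Rnn : ENNReal)) = ((Rnn : NNReal) : ENNReal) from rfl]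
    rw [enorm_eq_nnnorm, ENNReal.coe_lt_coe, ← NNReal.coe_lt_coe, coe_nnnorm, hRnncoe]
    exact hτR'
  have hsum0 := hg.hasSum hτball
  -- φ τ = 1
  have hφτ : φ ((τ:ℝ):ℂ) = 1 := by
    have h1 : (1:ℂ) - ((τ:ℝ):ℂ) = ((Real.exp (-(1/ε)) : ℝ) : ℂ) := by
      rw [hτdef]; push_cast; ring
    rw [hφdef]
    show -(ε:ℂ) * Complex.log (1 - ((τ:ℝ):ℂ)) = 1
    have hεc : (ε:ℂ) ≠ 0 := by exact_mod_cast hε.ne'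
    rw [h1, ← Complex.ofReal_log (Real.exp_pos _).le, Real.log_exp]
    push_cast
    field_simp
  have hsum : HasSum (fun n => q n fun _ => ((τ:ℝ):ℂ)) (f 1) := by
    have : (f ∘ φ) (0 + ((τ:ℝ):ℂ)) = f 1 := by
      rw [zero_add, Function.comp_apply, hφτ]
    rw [← this]
    exact hsum0
  -- shift the sum
  have hS0 : ∑ i ∈ Finset.range (N+1), (q i fun _ => ((τ:ℝ):ℂ)) = 0 := by
    apply Finset.sum_eq_zero
    intro i hi
    have hiN : i ≤ N := Nat.lt_succ_iff.mp (Finset.mem_range.mp hi)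
    rw [hqzero i hiN]
    simp
  -- geometric tail estimate
  have hf1 : f 1 = P 1 - Q 1 := by rw [hfdef]
  clear_value r q Rnn τ R f
  set x : ℝ := τ / R with hxdef
  have hx0 : 0 ≤ x := by rw [hxdef]; positivity
  have hx1 : x < 1 := by rw [hxdef, div_lt_one hRpos]; exact hτR
  have hshift : HasSum (fun m => q (m+(N+1)) fun _ => ((τ:ℝ):ℂ)) (f 1) := by
    refine (hasSum_nat_add_iff (f := fun n => q n fun _ => ((τ:ℝ):ℂ)) (N+1)).mpr ?_
    rw [hS0, add_zero]
    exact hsum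
  have hsn : ∀ n : ℕ, ‖q n fun _ => ((τ:ℝ):ℂ)‖ ≤ (2*M) * x^n := by
    intro n
    calc ‖q n fun _ => ((τ:ℝ):ℂ)‖ ≤ ‖q n‖ * ∏ _i : Fin n, ‖((τ:ℝ):ℂ)‖ :=
          (q n).le_opNorm _
      _ = ‖q n‖ * τ^n := by
          rw [Finset.prod_const, Complex.norm_real, Real.norm_eq_abs, abs_of_pos hτpos,
            Finset.card_univ, Fintype.card_fin]
      _ ≤ ((2*M)/R^n) * τ^n := mul_le_mul_of_nonneg_right (hqnorm n) (by positivity)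
      _ = (2*M) * x^n := by
          rw [hxdef, div_pow]
          field_simp
  have hmaj : ∀ m : ℕ, ‖q (m+(N+1)) fun _ => ((τ:ℝ):ℂ)‖ ≤ ((2*M) * x^(N+1)) * x^m := by
    intro m
    calc ‖q (m+(N+1)) fun _ => ((τ:ℝ):ℂ)‖ ≤ (2*M) * x^(m+(N+1)) := hsn _
      _ = ((2*M) * x^(N+1)) * x^m := by ring
  have hsummaj : Summable (fun m:ℕ => ((2*M) * x^(N+1)) * x^m) :=
    (summable_geometric_of_lt_one hx0 hx1).mul_left _
  have hsumnorm : Summable (fun m:ℕ => ‖q (m+(N+1)) fun _ => ((τ:ℝ):ℂ)‖) :=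
    Summable.of_nonneg_of_le (fun _ => norm_nonneg _) hmaj hsummaj
  have hle1 : ‖f 1‖ ≤ ∑' m:ℕ, ‖q (m+(N+1)) fun _ => ((τ:ℝ):ℂ)‖ := by
    rw [← hshift.tsum_eq]
    exact norm_tsum_le_tsum_norm hsumnorm
  have hle2 : (∑' m:ℕ, ‖q (m+(N+1)) fun _ => ((τ:ℝ):ℂ)‖)
      ≤ ∑' m:ℕ, ((2*M) * x^(N+1)) * x^m :=
    Summable.tsum_le_tsum hmaj hsumnorm hsummaj
  have hgeo : ∑' m:ℕ, ((2*M) * x^(N+1)) * x^m = ((2*M) * x^(N+1)) * (1-x)⁻¹ := by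
    rw [tsum_mul_left, tsum_geometric_of_lt_one hx0 hx1]
  have hfinal : ((2*M) * x^(N+1)) * (1-x)⁻¹ = 2*M/((r-1)*r^N) := by
    have hτne : τ ≠ 0 := hτpos.ne'
    have hRne : R ≠ 0 := hRpos.ne'
    have hRτ : R - τ ≠ 0 := ne_of_gt (by linarith)
    rw [hr, hxdef, div_pow, one_sub_div hRne, div_sub_one hτne, div_pow]
    field_simp
    ring
  have hfin : ‖f 1‖ ≤ 2*M/((r-1)*r^N) := by
    rw [← hfinal, ← hgeo]
    exact le_trans hle1 hle2
  show ‖P 1 - Q 1‖ ≤ 2 * M / ((r - 1) * r ^ N)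
  rw [← hf1]
  exact hfin
end

section
/- Let G = (V,E) be a finite simple graph, let v ∈ V, let Λ ⊆ V ∖ {v}, let σ and τ be two boundary conditions on Λ, and let d = d_G(v, σ≠τ). Then for every k with 0 ≤ k ≤ d − 1, the Taylor coefficient of order k at λ = 0 of the rational function P_{G[σ],v} equals the Taylor coefficient of order k at λ = 0 of P_{G[τ],v}. -/
open Finset

noncomputable section

namespace HardCore

open scoped Classical

variable {V : Type*}

/-- `s` is an independent set in the graph `G`. -/
def IsInd (G : SimpleGraph V) (s : Finset V) : Prop :=
  ∀ u ∈ s, ∀ w ∈ s, ¬ G.Adj u w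

/-- The independence polynomial of the subgraph of `G` induced on the vertex set `A`,
evaluated at `lam`:  `Z_{G[A]}(lam) = ∑_{I ⊆ A independent} lam^{|I|}`. -/
def Z (R : Type*) [Field R] [Fintype V] (G : SimpleGraph V) (A : Finset V) (lam : R) : R :=
  ∑ s ∈ A.powerset, if IsInd G s then lam ^ s.card else 0

/-- The closed neighbourhood `N[v]` of a vertex `v` as a `Finset`. -/
def closedNbhd [Fintype V] (G : SimpleGraph V) (v : V) : Finset V :=
  univ.filter fun u => u = v ∨ G.Adj v u

/-- The ratio `P_{G[A],v}(lam) = lam * Z_{G[A] ∖ N[v]}(lam) / Z_{G[A]}(lam)` for the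
subgraph of `G` induced on `A`. -/
def ratio {R : Type*} [Field R] [Fintype V] (G : SimpleGraph V) (A : Finset V) (v : V)
    (lam : R) : R :=
  lam * Z R G (A \ closedNbhd G v) lam / Z R G A lam

/-- `σ` is a valid boundary condition on `Λ`: the set of vertices of `Λ` set to `1`
is independent in the subgraph of `G` induced by `Λ`. -/
def IsBC (G : SimpleGraph V) (Λ : Finset V) (σ : V → Bool) : Prop :=
  ∀ u ∈ Λ, ∀ w ∈ Λ, σ u = true → σ w = true → ¬ G.Adj u w

/-- An independent set `s` is compatible with the boundary condition `σ` on `Λ`: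
`σ⁻¹(1) ⊆ s` and `σ⁻¹(0) ∩ s = ∅`. -/
def Compat (Λ : Finset V) (σ : V → Bool) (s : Finset V) : Prop :=
  ∀ u ∈ Λ, (u ∈ s ↔ σ u = true)

/-- The conditional probability `Pr_μ[v ∈ I ∣ σ]` that `v` belongs to the random
independent set drawn from the hard-core measure at `lam`, conditioned on the
boundary condition `σ` on `Λ`. -/
def condProb [Fintype V] (G : SimpleGraph V) (lam : ℝ) (Λ : Finset V) (σ : V → Bool)
    (v : V) : ℝ :=
  (∑ s : Finset V, if IsInd G s ∧ Compat Λ σ s ∧ v ∈ s then lam ^ s.card else 0) /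
  (∑ s : Finset V, if IsInd G s ∧ Compat Λ σ s then lam ^ s.card else 0)

/-- The hard-core measure on `G` at activity `lam` satisfies the strong spatial mixing
bound with constant `C` and exponential rate `r`:  for every vertex `v`, every
`Λ ⊆ V ∖ {v}` and any two boundary conditions `σ, τ` on `Λ`,
`|Pr[v ∈ I ∣ σ] − Pr[v ∈ I ∣ τ]| ≤ C ⬝ r^{−d_G(v, σ ≠ τ)}`.
(The distance `d_G(v, σ ≠ τ)` is encoded by quantifying over all `d : ℕ` that are a
lower bound, in `ℕ∞`, for the distance from `v` to every vertex at which `σ, τ` differ.) -/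
def SSM [Fintype V] (G : SimpleGraph V) (lam : ℝ) (C r : ℝ) : Prop :=
  ∀ (v : V) (Λ : Finset V), v ∉ Λ → ∀ σ τ : V → Bool, IsBC G Λ σ → IsBC G Λ τ →
    ∀ d : ℕ, (∀ u ∈ Λ, σ u ≠ τ u → (d : ℕ∞) ≤ G.edist v u) →
      |condProb G lam Λ σ v - condProb G lam Λ τ v| ≤ C * r ^ (-(d : ℤ))

/-- `G` has maximum degree at most `Δ`. -/
def MaxDegLE [Fintype V] (G : SimpleGraph V) (Δ : ℕ) : Prop :=
  ∀ v : V, (univ.filter fun u => G.Adj v u).card ≤ Δ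

/-- The vertex set of the graph `G[σ]`, i.e. the vertices of `V ∖ Λ` that are not
adjacent to any vertex of `Λ` that is set to `1` by `σ`. -/
def goodSet [Fintype V] (G : SimpleGraph V) (Λ : Finset V) (σ : V → Bool) : Finset V :=
  (univ \ Λ).filter fun u => ∀ w ∈ Λ, σ w = true → ¬ G.Adj w u

end HardCore


namespace HardCore
open scoped Classical
open PowerSeries

section Aux
variable {V : Type*} [Fintype V] (G : SimpleGraph V)

set_option linter.unusedSectionVars false

/-- The independence polynomial as a `Polynomial ℂ`. -/
def Zpoly (A : Finset V) : Polynomial ℂ :=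
  ∑ s ∈ A.powerset, if IsInd G s then Polynomial.X ^ s.card else 0

lemma Zpoly_eval (A : Finset V) (lam : ℂ) : (Zpoly G A).eval lam = Z ℂ G A lam := by
  simp only [Zpoly, Z, Polynomial.eval_finset_sum, apply_ite (Polynomial.eval lam),
    Polynomial.eval_pow, Polynomial.eval_X, Polynomial.eval_zero]

lemma IsInd.mono {G : SimpleGraph V} {s t : Finset V} (h : IsInd G s) (hts : t ⊆ s) :
    IsInd G t := fun u hu w hw => h u (hts hu) w (hts hw)

lemma isInd_empty : IsInd G (∅ : Finset V) := by intro u hu; simp at hu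

lemma Zpoly_coeff_zero (A : Finset V) : (Zpoly G A).coeff 0 = 1 := by
  rw [Zpoly]
  rw [Polynomial.finset_sum_coeff]
  rw [Finset.sum_eq_single (∅ : Finset V)]
  · simp [isInd_empty]
  · intro s hs hne
    rcases eq_or_ne s.card 0 with hc | hc
    · exact absurd (Finset.card_eq_zero.mp hc) hne
    · simp only [apply_ite (fun p : Polynomial ℂ => p.coeff 0), Polynomial.coeff_zero]
      rw [Polynomial.coeff_X_pow]
      simp [Ne.symm hc]
  · intro h
    exact absurd (Finset.empty_mem_powerset A) h

/-- Key recursion: splitting independent sets according to whether they contain `u`. -/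
lemma Zpoly_rec {A : Finset V} {u : V} (hu : u ∈ A) :
    Zpoly G A = Zpoly G (A.erase u) + Polynomial.X * Zpoly G (A \ closedNbhd G u) := by
  have expand : ∀ B : Finset V, Zpoly G B = ∑ s ∈ B.powerset.filter (IsInd G), Polynomial.X ^ s.card := by
    intro B; rw [Zpoly, Finset.sum_filter]
  rw [expand, expand, expand]
  rw [← Finset.sum_filter_add_sum_filter_not (A.powerset.filter (IsInd G)) (fun s => u ∈ s)]
  rw [add_comm]
  congr 1
  · -- sets not containing u
    congr 1
    ext s
    simp only [Finset.mem_filter, Finset.mem_powerset, Finset.subset_erase]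
    tauto
  · -- sets containing u
    rw [Finset.mul_sum]
    rw [Finset.sum_nbij' (i := fun s => s.erase u) (j := fun t => insert u t)]
    · intro s hs
      simp only [Finset.mem_filter, Finset.mem_powerset] at hs ⊢
      obtain ⟨⟨hsub, hind⟩, hus⟩ := hs
      refine ⟨?_, hind.mono (Finset.erase_subset _ _)⟩
      intro w hw
      rw [Finset.mem_erase] at hw
      rw [Finset.mem_sdiff]
      refine ⟨hsub hw.2, ?_⟩
      simp only [closedNbhd, Finset.mem_filter, Finset.mem_univ, true_and]
      push_neg
      exact ⟨hw.1, hind u hus w hw.2⟩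
    · intro t ht
      simp only [Finset.mem_filter, Finset.mem_powerset] at ht ⊢
      obtain ⟨hsub, hind⟩ := ht
      have hnt : u ∉ t := by
        intro hut
        have := hsub hut
        rw [Finset.mem_sdiff] at this
        exact this.2 (by simp [closedNbhd])
      have hNb : ∀ w ∈ t, ¬ G.Adj u w := by
        intro w hw
        have := hsub hw
        rw [Finset.mem_sdiff] at this
        simp only [closedNbhd, Finset.mem_filter, Finset.mem_univ, true_and] at this
        push_neg at this
        exact this.2.2
      refine ⟨⟨?_, ?_⟩, Finset.mem_insert_self u t⟩
      · intro w hw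
        rcases Finset.mem_insert.mp hw with h | hw
        · subst h; exact hu
        · exact (Finset.mem_sdiff.mp (hsub hw)).1
      · intro a ha b hb
        rcases Finset.mem_insert.mp ha with h1 | h1 <;>
          rcases Finset.mem_insert.mp hb with h2 | h2
        · subst h1; subst h2; exact G.irrefl
        · subst h1; exact hNb b h2
        · subst h2; intro h; exact hNb a h1 (G.adj_symm h)
        · exact hind a h1 b h2
    · intro s hs
      simp only [Finset.mem_filter] at hs
      exact Finset.insert_erase hs.2
    · intro t ht
      simp only [Finset.mem_filter, Finset.mem_powerset] at ht
      have hnt : u ∉ t := by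
        intro hut
        have := ht.1 hut
        rw [Finset.mem_sdiff] at this
        exact this.2 (by simp [closedNbhd])
      exact Finset.erase_insert hnt
    · intro s hs
      simp only [Finset.mem_filter] at hs
      rw [Finset.card_erase_of_mem hs.2]
      have : 1 ≤ s.card := Finset.card_pos.mpr ⟨u, hs.2⟩
      rw [← pow_succ']
      congr 1
      omega


/-! ### Power series layer -/

open PowerSeries

def Zps (A : Finset V) : PowerSeries ℂ := (Zpoly G A : PowerSeries ℂ)

lemma Zps_const (A : Finset V) : PowerSeries.constantCoeff (Zps G A) = 1 := by
  rw [← PowerSeries.coeff_zero_eq_constantCoeff, Zps, Polynomial.coeff_coe, Zpoly_coeff_zero]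

lemma Zps_ne (A : Finset V) : PowerSeries.constantCoeff (Zps G A) ≠ 0 := by
  rw [Zps_const]; exact one_ne_zero

lemma Zps_mul_inv (A : Finset V) : Zps G A * (Zps G A)⁻¹ = 1 :=
  PowerSeries.mul_inv_cancel _ (Zps_ne G A)

/-- The occupation-ratio power series. -/
def Rps (A : Finset V) (v : V) : PowerSeries ℂ :=
  PowerSeries.X * Zps G (A \ closedNbhd G v) * (Zps G A)⁻¹

lemma Zps_rec {A : Finset V} {u : V} (hu : u ∈ A) :
    Zps G A = Zps G (A.erase u) + PowerSeries.X * Zps G (A \ closedNbhd G u) := by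
  have := congrArg (fun p : Polynomial ℂ => (p : PowerSeries ℂ)) (Zpoly_rec G hu)
  simpa [Zps, Polynomial.coe_add, Polynomial.coe_mul, Polynomial.coe_X] using this

lemma Zps_erase {A : Finset V} {u : V} (hu : u ∈ A) :
    Zps G (A.erase u) = Zps G A * (1 - Rps G A u) := by
  have h1 : Zps G A * Rps G A u = PowerSeries.X * Zps G (A \ closedNbhd G u) := by
    rw [Rps]
    calc Zps G A * (PowerSeries.X * Zps G (A \ closedNbhd G u) * (Zps G A)⁻¹)
        = PowerSeries.X * Zps G (A \ closedNbhd G u) * (Zps G A * (Zps G A)⁻¹) := by ring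
      _ = PowerSeries.X * Zps G (A \ closedNbhd G u) := by rw [Zps_mul_inv, mul_one]
  linear_combination h1 - Zps_rec G hu

/-- Telescoping product. -/
def Tprod : Finset V → List V → PowerSeries ℂ
  | _, [] => 1
  | A, u :: L => (1 - Rps G A u) * Tprod (A.erase u) L

@[simp] lemma Tprod_nil (A : Finset V) : Tprod G A [] = 1 := rfl

lemma Tprod_cons (A : Finset V) (u : V) (L : List V) :
    Tprod G A (u :: L) = (1 - Rps G A u) * Tprod G (A.erase u) L := rfl

lemma telescope : ∀ (L : List V) (A : Finset V), L.Nodup → (∀ u ∈ L, u ∈ A) →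
    Zps G (A \ L.toFinset) = Zps G A * Tprod G A L := by
  intro L
  induction L with
  | nil => intro A _ _; simp
  | cons u L ih =>
    intro A hnd hmem
    have h1 : A \ (u :: L).toFinset = (A.erase u) \ L.toFinset := by
      ext w
      simp only [List.toFinset_cons, Finset.mem_sdiff, Finset.mem_erase, Finset.mem_insert]
      tauto
    have hnd' := List.nodup_cons.mp hnd
    rw [h1, ih (A.erase u) hnd'.2 ?_, Zps_erase G (hmem u List.mem_cons_self), Tprod_cons]
    · ring
    · intro w hw
      rw [Finset.mem_erase]
      exact ⟨fun h => hnd'.1 (h ▸ hw), hmem w (List.mem_cons_of_mem _ hw)⟩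

/-! ### Coefficient agreement -/

/-- agreement of coefficients up to order `m` -/
def Ecoeff (m : ℕ) (f g : PowerSeries ℂ) : Prop :=
  ∀ j ≤ m, PowerSeries.coeff j f = PowerSeries.coeff j g

lemma Ecoeff.refl (m : ℕ) (f : PowerSeries ℂ) : Ecoeff m f f := fun _ _ => rfl

lemma Ecoeff.mul {m : ℕ} {f f' g g' : PowerSeries ℂ} (hf : Ecoeff m f f') (hg : Ecoeff m g g') :
    Ecoeff m (f * g) (f' * g') := by
  intro j hj
  rw [PowerSeries.coeff_mul, PowerSeries.coeff_mul]
  apply Finset.sum_congr rfl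
  intro x hx
  rw [Finset.HasAntidiagonal.mem_antidiagonal] at hx
  rw [hf x.1 (le_trans (by omega) hj), hg x.2 (le_trans (by omega) hj)]

lemma Ecoeff.one_sub {m : ℕ} {f f' : PowerSeries ℂ} (hf : Ecoeff m f f') :
    Ecoeff m (1 - f) (1 - f') := by
  intro j hj
  simp only [map_sub]
  rw [hf j hj]

lemma Ecoeff.X_mul {m : ℕ} {f f' : PowerSeries ℂ} (hf : Ecoeff m f f') :
    Ecoeff (m + 1) (PowerSeries.X * f) (PowerSeries.X * f') := by
  intro j hj
  cases j with
  | zero => simp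
  | succ n =>
    rw [PowerSeries.coeff_succ_X_mul, PowerSeries.coeff_succ_X_mul]
    exact hf n (by omega)

lemma geom_eq (T : PowerSeries ℂ) (hT : PowerSeries.constantCoeff T = 0) :
    T * (1 + T)⁻¹ = T - (T * (1 + T)⁻¹) * T := by
  have hunit : PowerSeries.constantCoeff (1 + T) ≠ 0 := by simp [hT]
  have hmul : (1 + T) * (1 + T)⁻¹ = 1 := PowerSeries.mul_inv_cancel _ hunit
  have expand : T * (1 + T)⁻¹ + (T * (1 + T)⁻¹) * T = T := by
    calc T * (1 + T)⁻¹ + (T * (1 + T)⁻¹) * T = T * ((1 + T) * (1 + T)⁻¹) := by ring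
    _ = T := by rw [hmul, mul_one]
  linear_combination expand

lemma Ecoeff.geom {m : ℕ} {S S' : PowerSeries ℂ}
    (hS : PowerSeries.constantCoeff S = 0) (hS' : PowerSeries.constantCoeff S' = 0)
    (h : Ecoeff m S S') : Ecoeff m (S * (1 + S)⁻¹) (S' * (1 + S')⁻¹) := by
  intro j
  induction j using Nat.strong_induction_on with
  | _ j ih =>
    intro hjm
    rw [congrArg (PowerSeries.coeff j) (geom_eq S hS),
      congrArg (PowerSeries.coeff j) (geom_eq S' hS'), map_sub, map_sub, h j hjm]
    congr 1
    rw [PowerSeries.coeff_mul, PowerSeries.coeff_mul]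
    apply Finset.sum_congr rfl
    intro x hx
    rw [Finset.HasAntidiagonal.mem_antidiagonal] at hx
    rcases Nat.eq_zero_or_pos x.2 with h2 | h2
    · rw [h2]
      simp [PowerSeries.coeff_zero_eq_constantCoeff, hS, hS']
    · have hx1 : x.1 < j := by omega
      rw [ih x.1 hx1 (by omega), h x.2 (by omega)]


lemma Rps_coeff_zero (A : Finset V) (v : V) :
    PowerSeries.coeff 0 (Rps G A v) = 0 := by
  simp [Rps, PowerSeries.coeff_zero_eq_constantCoeff, map_mul]

lemma Rps_coeff_one (A : Finset V) (v : V) :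
    PowerSeries.coeff 1 (Rps G A v) = 1 := by
  rw [Rps, mul_assoc, show (1 : ℕ) = 0 + 1 from rfl, PowerSeries.coeff_succ_X_mul,
    PowerSeries.coeff_zero_eq_constantCoeff, map_mul, Zps_const,
    PowerSeries.constantCoeff_inv, Zps_const]
  norm_num

/-- **Main localization lemma**: coefficients of the ratio power series up to order `k`
only depend on the ball of radius `k - 1` around `v`. -/
lemma Rps_coeff_eq : ∀ (k : ℕ) (v : V) (A B : Finset V),
    (∀ u : V, G.edist v u < (k : ℕ∞) → (u ∈ A ↔ u ∈ B)) →
    Ecoeff k (Rps G A v) (Rps G B v) := by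
  intro k
  induction k with
  | zero =>
    intro v A B _ j hj
    interval_cases j
    rw [Rps_coeff_zero, Rps_coeff_zero]
  | succ k ih =>
    intro v A B hball
    cases k with
    | zero =>
      intro j hj
      interval_cases j
      · rw [Rps_coeff_zero, Rps_coeff_zero]
      · rw [Rps_coeff_one, Rps_coeff_one]
    | succ k' =>
      -- the interesting case: order `k' + 2`
      have hcast2 : ((k' + 1 + 1 : ℕ) : ℕ∞) = 1 + ((k' + 1 : ℕ) : ℕ∞) := by
        push_cast; ring
      have hv : v ∈ A ↔ v ∈ B := by
        apply hball v
        rw [SimpleGraph.edist_self]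
        exact_mod_cast Nat.succ_pos (k' + 1)
      have hadj_lt : ∀ u : V, G.Adj v u → G.edist v u < ((k' + 1 + 1 : ℕ) : ℕ∞) := by
        intro u h
        rw [SimpleGraph.edist_eq_one_iff_adj.mpr h]
        exact_mod_cast Nat.one_lt_succ_succ k'
      set N : Finset V := A.filter (fun u => G.Adj v u) with hN
      have hNB : N = B.filter (fun u => G.Adj v u) := by
        ext u
        simp only [hN, Finset.mem_filter]
        constructor
        · rintro ⟨h1, h2⟩; exact ⟨(hball u (hadj_lt u h2)).mp h1, h2⟩
        · rintro ⟨h1, h2⟩; exact ⟨(hball u (hadj_lt u h2)).mpr h1, h2⟩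
      set L : List V := N.toList with hL
      have hLnd : L.Nodup := N.nodup_toList
      have hLadj : ∀ u ∈ L, G.Adj v u := by
        intro u hu
        have := Finset.mem_toList.mp hu
        rw [hN] at this
        exact (Finset.mem_filter.mp this).2
      have hLA : ∀ u ∈ L, u ∈ A := by
        intro u hu
        have := Finset.mem_toList.mp hu
        rw [hN] at this
        exact (Finset.mem_filter.mp this).1
      have hLB : ∀ u ∈ L, u ∈ B := by
        intro u hu
        have := Finset.mem_toList.mp hu
        rw [hNB] at this
        exact (Finset.mem_filter.mp this).1
      have hLtf : L.toFinset = N := Finset.toList_toFinset N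
      -- coefficient agreement for the telescoping products
      have Tcoeff : ∀ (L' : List V), (∀ u ∈ L', G.Adj v u) → ∀ (A' B' : Finset V),
          (∀ w : V, G.edist v w < ((k' + 1 + 1 : ℕ) : ℕ∞) → (w ∈ A' ↔ w ∈ B')) →
          Ecoeff (k' + 1) (Tprod G A' L') (Tprod G B' L') := by
        intro L'
        induction L' with
        | nil => intro _ A' B' _; exact Ecoeff.refl _ _
        | cons u L'' ihL =>
          intro hadj A' B' hb'
          rw [Tprod_cons, Tprod_cons]
          apply Ecoeff.mul
          · apply Ecoeff.one_sub
            apply ih u A' B'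
            intro w hw
            apply hb' w
            calc G.edist v w ≤ G.edist v u + G.edist u w := SimpleGraph.edist_triangle
              _ = 1 + G.edist u w := by
                  rw [SimpleGraph.edist_eq_one_iff_adj.mpr (hadj u List.mem_cons_self)]
              _ < 1 + ((k' + 1 : ℕ) : ℕ∞) := by
                  exact WithTop.add_lt_add_left ENat.one_ne_top hw
              _ = ((k' + 1 + 1 : ℕ) : ℕ∞) := hcast2.symm
          · apply ihL (fun u' hu' => hadj u' (List.mem_cons_of_mem _ hu'))
            intro w hw
            simp only [Finset.mem_erase]
            rw [hb' w hw]
      by_cases hvA : v ∈ A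
      · -- v belongs to both vertex sets
        have hvB : v ∈ B := hv.mp hvA
        have key : ∀ C : Finset V, v ∈ C → (∀ w : V, w ∈ N ↔ (w ∈ C ∧ G.Adj v w)) →
            (∀ u ∈ L, u ∈ C) →
            Rps G C v = (PowerSeries.X * Tprod G (C.erase v) L) *
              (1 + PowerSeries.X * Tprod G (C.erase v) L)⁻¹ := by
          intro C hvC hNC hLC
          have hsub : ∀ u ∈ L, u ∈ C.erase v := by
            intro u hu
            rw [Finset.mem_erase]
            exact ⟨(hLadj u hu).ne', hLC u hu⟩
          have hC' : C \ closedNbhd G v = (C.erase v) \ L.toFinset := by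
            rw [hLtf]
            ext w
            simp only [Finset.mem_sdiff, Finset.mem_erase, closedNbhd,
              Finset.mem_filter, Finset.mem_univ, true_and, hNC w]
            tauto
          have htel : Zps G (C \ closedNbhd G v) =
              Zps G (C.erase v) * Tprod G (C.erase v) L := by
            rw [hC']
            exact telescope G L (C.erase v) hLnd hsub
          set S := PowerSeries.X * Tprod G (C.erase v) L with hS
          have hrec : Zps G C = Zps G (C.erase v) * (1 + S) := by
            rw [Zps_rec G hvC, htel, hS]; ring
          have hkey : Rps G C v * (1 + S) = S := by
            rw [Rps, htel]
            calc PowerSeries.X * (Zps G (C.erase v) * Tprod G (C.erase v) L) *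
                  (Zps G C)⁻¹ * (1 + S)
                = S * ((Zps G (C.erase v) * (1 + S)) * (Zps G C)⁻¹) := by rw [hS]; ring
              _ = S * (Zps G C * (Zps G C)⁻¹) := by rw [← hrec]
              _ = S := by rw [Zps_mul_inv, mul_one]
          have hScoeff : PowerSeries.constantCoeff S = 0 := by
            rw [hS, map_mul]
            simp
          have hu1 : PowerSeries.constantCoeff (1 + S) ≠ 0 := by
            simp [hScoeff]
          have hmul1 : (1 + S) * (1 + S)⁻¹ = 1 := PowerSeries.mul_inv_cancel _ hu1
          calc Rps G C v = Rps G C v * ((1 + S) * (1 + S)⁻¹) := by rw [hmul1, mul_one]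
            _ = (Rps G C v * (1 + S)) * (1 + S)⁻¹ := by ring
            _ = S * (1 + S)⁻¹ := by rw [hkey]
        rw [key A hvA (fun w => by rw [hN, Finset.mem_filter]) hLA,
          key B hvB (fun w => by rw [hNB, Finset.mem_filter]) hLB]
        apply Ecoeff.geom
        · rw [map_mul]; simp
        · rw [map_mul]; simp
        · exact (Tcoeff L hLadj (A.erase v) (B.erase v) (fun w hw => by
            simp only [Finset.mem_erase]
            rw [hball w hw])).X_mul
      · -- v belongs to neither vertex set
        have hvB : v ∉ B := fun h => hvA (hv.mpr h)
        have keyn : ∀ C : Finset V, v ∉ C → (∀ w : V, w ∈ N ↔ (w ∈ C ∧ G.Adj v w)) →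
            (∀ u ∈ L, u ∈ C) → Rps G C v = PowerSeries.X * Tprod G C L := by
          intro C hvC hNC hLC
          have hC' : C \ closedNbhd G v = C \ L.toFinset := by
            rw [hLtf]
            ext w
            simp only [Finset.mem_sdiff, closedNbhd,
              Finset.mem_filter, Finset.mem_univ, true_and, hNC w]
            constructor
            · rintro ⟨h1, h2⟩
              push_neg at h2
              exact ⟨h1, fun hc => h2.2 hc.2⟩
            · rintro ⟨h1, h2⟩
              refine ⟨h1, ?_⟩
              push_neg
              exact ⟨fun hwv => hvC (hwv ▸ h1), fun hadj => h2 ⟨h1, hadj⟩⟩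
          have htel : Zps G (C \ closedNbhd G v) = Zps G C * Tprod G C L := by
            rw [hC']
            exact telescope G L C hLnd hLC
          rw [Rps, htel]
          calc PowerSeries.X * (Zps G C * Tprod G C L) * (Zps G C)⁻¹
              = PowerSeries.X * Tprod G C L * (Zps G C * (Zps G C)⁻¹) := by ring
            _ = PowerSeries.X * Tprod G C L := by rw [Zps_mul_inv, mul_one]
        rw [keyn A hvA (fun w => by rw [hN, Finset.mem_filter]) hLA,
          keyn B hvB (fun w => by rw [hNB, Finset.mem_filter]) hLB]
        exact (Tcoeff L hLadj A B hball).X_mul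


/-! ### Analytic helpers -/

lemma polyAnalytic (p : Polynomial ℂ) (x : ℂ) : AnalyticAt ℂ (fun z => p.eval z) x := by
  have h := (analyticAt_id (𝕜 := ℂ) (E := ℂ) (z := x)).aeval_polynomial p
  simpa [Polynomial.aeval_def, Polynomial.eval₂_eq_eval_map] using h

lemma iteratedDerivWithin_isOpen {n : ℕ} {f : ℂ → ℂ} {s : Set ℂ} {x : ℂ}
    (hs : IsOpen s) (hx : x ∈ s) :
    iteratedDerivWithin n f s x = iteratedDeriv n f x := by
  simp only [iteratedDerivWithin, iteratedDeriv]
  rw [iteratedFDerivWithin_of_isOpen n hs hx]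

lemma iteratedDeriv_add_at {n : ℕ} {f g : ℂ → ℂ} {x : ℂ}
    (hf : ContDiffAt ℂ n f x) (hg : ContDiffAt ℂ n g x) :
    iteratedDeriv n (fun z => f z + g z) x = iteratedDeriv n f x + iteratedDeriv n g x := by
  obtain ⟨u, hu, hfu⟩ := hf.contDiffOn le_rfl (by simp)
  obtain ⟨w, hw, hgw⟩ := hg.contDiffOn le_rfl (by simp)
  obtain ⟨t, htuw, hto, hxt⟩ := mem_nhds_iff.mp (Filter.inter_mem hu hw)
  have h1 : UniqueDiffOn ℂ t := hto.uniqueDiffOn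
  rw [← iteratedDerivWithin_isOpen hto hxt (f := fun z => f z + g z),
    ← iteratedDerivWithin_isOpen hto hxt (f := f), ← iteratedDerivWithin_isOpen hto hxt (f := g)]
  exact iteratedDerivWithin_add hxt h1
    ((hfu.mono fun z hz => (htuw hz).1) x hxt) ((hgw.mono fun z hz => (htuw hz).2) x hxt)

lemma iteratedDeriv_pow_mul {k m : ℕ} (hkm : k < m) {w : ℂ → ℂ} (hw : AnalyticAt ℂ w 0) :
    iteratedDeriv k (fun z => z ^ m * w z) 0 = 0 := by
  induction k generalizing m w with
  | zero =>
    simp only [iteratedDeriv_zero]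
    rw [zero_pow (by omega), zero_mul]
  | succ k ihk =>
    obtain ⟨m, rfl⟩ : ∃ m', m = m' + 1 := ⟨m - 1, by omega⟩
    rw [iteratedDeriv_succ']
    have hev : ∀ᶠ y in nhds (0:ℂ), AnalyticAt ℂ w y := hw.eventually_analyticAt
    have hderiv : (deriv fun z => z ^ (m+1) * w z) =ᶠ[nhds (0:ℂ)]
        (fun z => z ^ m * ((m+1 : ℂ) * w z + z * deriv w z)) := by
      filter_upwards [hev] with y hy
      have h1 := (hasDerivAt_pow (m+1) y).mul hy.differentiableAt.hasDerivAt
      simp only [Nat.add_sub_cancel] at h1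
      rw [show (fun z : ℂ => z ^ (m + 1) * w z) = (fun x => x ^ (m + 1)) * w from rfl, h1.deriv]; push_cast; ring
    rw [hderiv.iteratedDeriv_eq k]
    have hw' : AnalyticAt ℂ (deriv w) 0 := by
      have h2 : AnalyticOnNhd ℂ w {y | AnalyticAt ℂ w y} := fun y hy => hy
      exact h2.deriv 0 hw
    exact ihk (by omega) ((analyticAt_const.mul hw).add (analyticAt_id.mul hw'))


end Aux
end HardCore

namespace HardCore
open scoped Classical

/-- Let `G` be a finite graph, `v` a vertex, `Λ ⊆ V ∖ {v}`, let `σ, τ` be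
two boundary conditions on `Λ` and let `d = d_G(v, σ ≠ τ)`.  Then for every `k ≤ d − 1`,
the order-`k` Taylor coefficients at `λ = 0` of `P_{G[σ],v}` and of `P_{G[τ],v}` agree. -/
theorem ratio_coeffs_agree {V : Type*} [Fintype V] (G : SimpleGraph V) (v : V)
    (Λ : Finset V) (hv : v ∉ Λ) (σ τ : V → Bool) (hσ : IsBC G Λ σ) (hτ : IsBC G Λ τ)
    (d : ℕ) (hd : ∀ u ∈ Λ, σ u ≠ τ u → (d : ℕ∞) ≤ G.edist v u) :
    ∀ k < d,
      iteratedDeriv k (fun lam : ℂ => ratio G (goodSet G Λ σ) v lam) 0 =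
      iteratedDeriv k (fun lam : ℂ => ratio G (goodSet G Λ τ) v lam) 0 := by
  intro k hk
  have hd1 : 1 ≤ d := by omega
  set A := goodSet G Λ σ with hA
  set B := goodSet G Λ τ with hB
  have hAB : ∀ u : V, G.edist v u < ((d - 1 : ℕ) : ℕ∞) → (u ∈ A ↔ u ∈ B) := by
    intro u hu
    have hagree : ∀ w ∈ Λ, G.Adj w u → σ w = τ w := by
      intro w hwΛ hadj
      by_contra hne
      have h1 : (d : ℕ∞) ≤ G.edist v w := hd w hwΛ hne
      have h2 : G.edist v w ≤ G.edist v u + 1 := by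
        calc G.edist v w ≤ G.edist v u + G.edist u w := SimpleGraph.edist_triangle
          _ = G.edist v u + 1 := by
              rw [SimpleGraph.edist_eq_one_iff_adj.mpr (G.adj_symm hadj)]
      have h4 : G.edist v u + 1 < ((d-1:ℕ):ℕ∞) + 1 := WithTop.add_lt_add_right ENat.one_ne_top hu
      have h5 : ((d-1:ℕ):ℕ∞) + 1 = (d:ℕ∞) := by
        have hnat : ((d-1) + 1 : ℕ) = d := by omega
        exact_mod_cast congrArg (Nat.cast : ℕ → ℕ∞) hnat
      exact lt_irrefl _ (lt_of_le_of_lt (le_trans h1 h2) (h5 ▸ h4))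
    rw [hA, hB]
    simp only [goodSet, Finset.mem_filter, Finset.mem_sdiff, Finset.mem_univ, true_and]
    constructor
    · rintro ⟨h1, h2⟩
      refine ⟨h1, fun w hw ht hadj => ?_⟩
      exact h2 w hw ((hagree w hw hadj).trans ht) hadj
    · rintro ⟨h1, h2⟩
      refine ⟨h1, fun w hw ht hadj => ?_⟩
      exact h2 w hw ((hagree w hw hadj).symm.trans ht) hadj
  have hE : Ecoeff (d-1) (Rps G A v) (Rps G B v) := Rps_coeff_eq G (d-1) v A B hAB
  set pA := Zpoly G (A \ closedNbhd G v) with hpA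
  set qA := Zpoly G A with hqA
  set pB := Zpoly G (B \ closedNbhd G v) with hpB
  set qB := Zpoly G B with hqB
  have hNNc : ∀ j < d, (Polynomial.X * (pA * qB - pB * qA)).coeff j = 0 := by
    intro j hj
    have e1 : Rps G A v * (Zps G A * Zps G B) =
        PowerSeries.X * Zps G (A \ closedNbhd G v) * Zps G B := by
      rw [Rps]
      calc PowerSeries.X * Zps G (A \ closedNbhd G v) * (Zps G A)⁻¹ * (Zps G A * Zps G B)
          = PowerSeries.X * Zps G (A \ closedNbhd G v) * Zps G B *
            (Zps G A * (Zps G A)⁻¹) := by ring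
        _ = _ := by rw [Zps_mul_inv, mul_one]
    have e2 : Rps G B v * (Zps G A * Zps G B) =
        PowerSeries.X * Zps G (B \ closedNbhd G v) * Zps G A := by
      rw [Rps]
      calc PowerSeries.X * Zps G (B \ closedNbhd G v) * (Zps G B)⁻¹ * (Zps G A * Zps G B)
          = PowerSeries.X * Zps G (B \ closedNbhd G v) * Zps G A *
            (Zps G B * (Zps G B)⁻¹) := by ring
        _ = _ := by rw [Zps_mul_inv, mul_one]
    have hps : ((Polynomial.X * (pA * qB - pB * qA) : Polynomial ℂ) : PowerSeries ℂ)
        = (Rps G A v - Rps G B v) * (Zps G A * Zps G B) := by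
      rw [sub_mul, e1, e2, Polynomial.coe_mul, Polynomial.coe_sub, Polynomial.coe_mul,
        Polynomial.coe_mul, Polynomial.coe_X]
      simp only [hpA, hqA, hpB, hqB, Zps]
      ring
    rw [← Polynomial.coeff_coe, hps, PowerSeries.coeff_mul]
    apply Finset.sum_eq_zero
    intro x hx
    rw [Finset.HasAntidiagonal.mem_antidiagonal] at hx
    have hx1 : x.1 ≤ d - 1 := by omega
    rw [map_sub, hE x.1 hx1, sub_self, zero_mul]
  obtain ⟨M, hM⟩ : (Polynomial.X : Polynomial ℂ)^d ∣ Polynomial.X * (pA * qB - pB * qA) :=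
    Polynomial.X_pow_dvd_iff.mpr hNNc
  have hq0A : qA.eval 0 ≠ 0 := by
    rw [hqA, ← Polynomial.coeff_zero_eq_eval_zero, Zpoly_coeff_zero]; exact one_ne_zero
  have hq0B : qB.eval 0 ≠ 0 := by
    rw [hqB, ← Polynomial.coeff_zero_eq_eval_zero, Zpoly_coeff_zero]; exact one_ne_zero
  have hOpen : IsOpen {z : ℂ | Polynomial.eval z qA ≠ 0 ∧ Polynomial.eval z qB ≠ 0} := by
    have c1 : Continuous fun z : ℂ => qA.eval z := qA.continuous
    have c2 : Continuous fun z : ℂ => qB.eval z := qB.continuous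
    exact (isOpen_ne.preimage c1).inter (isOpen_ne.preimage c2)
  have hmem : {z : ℂ | Polynomial.eval z qA ≠ 0 ∧ Polynomial.eval z qB ≠ 0} ∈ nhds (0:ℂ) :=
    hOpen.mem_nhds ⟨hq0A, hq0B⟩
  set h : ℂ → ℂ := fun z => z ^ d * (M.eval z / (qA.eval z * qB.eval z)) with hh
  have hfg : (fun lam : ℂ => ratio G A v lam) =ᶠ[nhds (0:ℂ)]
      (fun z => ratio G B v z + h z) := by
    filter_upwards [hmem] with z hz
    obtain ⟨h1, h2⟩ := hz
    have hpe := congrArg (Polynomial.eval z) hM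
    simp only [Polynomial.eval_mul, Polynomial.eval_sub, Polynomial.eval_X,
      Polynomial.eval_pow] at hpe
    show ratio G A v z = ratio G B v z + z ^ d * (M.eval z / (qA.eval z * qB.eval z))
    simp only [ratio, ← Zpoly_eval, ← hpA, ← hqA, ← hpB, ← hqB]
    field_simp
    linear_combination hpe
  rw [hfg.iteratedDeriv_eq k]
  have hgan : AnalyticAt ℂ (fun z : ℂ => ratio G B v z) 0 := by
    have heq : (fun z : ℂ => ratio G B v z) = fun z => z * pB.eval z / qB.eval z := by
      funext z
      simp only [ratio, ← Zpoly_eval, ← hpB, ← hqB]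
    rw [heq]
    exact (analyticAt_id.mul (polyAnalytic pB 0)).div (polyAnalytic qB 0) hq0B
  have hwan : AnalyticAt ℂ (fun z : ℂ => M.eval z / (qA.eval z * qB.eval z)) 0 :=
    (polyAnalytic M 0).div ((polyAnalytic qA 0).mul (polyAnalytic qB 0)) (mul_ne_zero hq0A hq0B)
  have hhan : AnalyticAt ℂ h 0 := by
    rw [hh]
    exact (analyticAt_id.pow d).mul hwan
  rw [iteratedDeriv_add_at (hgan.contDiffAt) (hhan.contDiffAt)]
  have hzero : iteratedDeriv k h 0 = 0 := by
    rw [hh]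
    exact iteratedDeriv_pow_mul hk hwan
  rw [hzero, add_zero]


end HardCore

end
end
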